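/- arXiv:1903.03781 — 7 statements merged into one kernel-verified Lean document; each statement's English description precedes it below -/
import Mathlib

section
/- Let D = {(r,t) ∈ ℝ² : r > 0} and let μ, ω : D → ℝ be C² functions satisfying on D the system ω_tt − ω_rr + ω_r/r = 4(μ_r ω_r − μ_t ω_t) and μ_tt − μ_rr − μ_r/r = (e^{4μ}/(2r²))(ω_t² − ω_r²). Define F(r,t) = r(μ_t² + μ_r²) + (e^{4μ}/(4r))(ω_t² + ω_r²) and G(r,t) = 2r μ_t μ_r + (1/(2r)) e^{4μ} ω_r ω_t. Then ∂F/∂t − ∂G/∂r = 0 at every point of D, i.e. the differential form F dr + G dt is closed (hence exact on the simply connected domain D). -/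
open Filter Topology

/-- Partial derivative with respect to the first variable `r`. -/
noncomputable def pr (f : ℝ → ℝ → ℝ) (r t : ℝ) : ℝ := deriv (fun x => f x t) r
/-- Partial derivative with respect to the second variable `t`. -/
noncomputable def pt (f : ℝ → ℝ → ℝ) (r t : ℝ) : ℝ := deriv (fun x => f r x) t

private lemma curve_r (t r : ℝ) : HasDerivAt (fun x : ℝ => (x, t)) ((1:ℝ), (0:ℝ)) r :=
  (hasDerivAt_id r).prodMk (hasDerivAt_const r t)

private lemma curve_t (r t : ℝ) : HasDerivAt (fun s : ℝ => (r, s)) ((0:ℝ), (1:ℝ)) t :=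
  (hasDerivAt_const t r).prodMk (hasDerivAt_id t)

lemma partials (f : ℝ → ℝ → ℝ) {r t : ℝ}
    (hf : ContDiffOn ℝ 2 (fun p : ℝ × ℝ => f p.1 p.2) {p : ℝ × ℝ | 0 < p.1}) (hr : 0 < r) :
    ∃ A B C : ℝ,
      HasDerivAt (fun x => f x t) (pr f r t) r ∧
      HasDerivAt (fun s => f r s) (pt f r t) t ∧
      HasDerivAt (fun x => pr f x t) A r ∧
      HasDerivAt (fun x => pt f x t) C r ∧
      HasDerivAt (fun s => pr f r s) C t ∧
      HasDerivAt (fun s => pt f r s) B t := by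
  set F : ℝ × ℝ → ℝ := fun p => f p.1 p.2 with hF
  have hD : IsOpen {p : ℝ × ℝ | 0 < p.1} := isOpen_lt continuous_const continuous_fst
  have hp0 : ((r, t) : ℝ × ℝ) ∈ {p : ℝ × ℝ | 0 < p.1} := hr
  have hFat : ContDiffAt ℝ 2 F (r, t) := hf.contDiffAt (hD.mem_nhds hp0)
  have hdF : ContDiffAt ℝ 1 (fderiv ℝ F) (r, t) := hFat.fderiv_right (by norm_num)
  set H := fderiv ℝ (fderiv ℝ F) (r, t) with hHdef
  have hH : HasFDerivAt (fderiv ℝ F) H (r, t) :=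
    (hdF.differentiableAt one_ne_zero).hasFDerivAt
  have hsymm : ∀ v w, H v w = H w v := hFat.isSymmSndFDerivAt (by simp)
  have hev : ∀ᶠ q in 𝓝 ((r, t) : ℝ × ℝ), DifferentiableAt ℝ F q := by
    filter_upwards [hFat.eventually (by norm_num)] with q hq
    exact hq.differentiableAt (by norm_num)
  have hpr_ev : ∀ᶠ q in 𝓝 ((r, t) : ℝ × ℝ), pr f q.1 q.2 = fderiv ℝ F q ((1:ℝ), (0:ℝ)) := by
    filter_upwards [hev] with q hq
    obtain ⟨q1, q2⟩ := q
    exact (hq.hasFDerivAt.comp_hasDerivAt q1 (curve_r q2 q1)).deriv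
  have hpt_ev : ∀ᶠ q in 𝓝 ((r, t) : ℝ × ℝ), pt f q.1 q.2 = fderiv ℝ F q ((0:ℝ), (1:ℝ)) := by
    filter_upwards [hev] with q hq
    obtain ⟨q1, q2⟩ := q
    exact (hq.hasFDerivAt.comp_hasDerivAt q2 (curve_t q1 q2)).deriv
  have hdiffF : DifferentiableAt ℝ F (r, t) := hFat.differentiableAt (by norm_num)
  refine ⟨H (1, 0) (1, 0), H (0, 1) (0, 1), H (1, 0) (0, 1), ?_, ?_, ?_, ?_, ?_, ?_⟩
  · have h : HasDerivAt (fun x => f x t) (fderiv ℝ F (r, t) (1, 0)) r :=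
      by have := hdiffF.hasFDerivAt.comp_hasDerivAt r (curve_r t r); exact this
    have hh : pr f r t = fderiv ℝ F (r, t) (1, 0) := h.deriv
    rw [hh]; exact h
  · have h : HasDerivAt (fun s => f r s) (fderiv ℝ F (r, t) (0, 1)) t :=
      by have := hdiffF.hasFDerivAt.comp_hasDerivAt t (curve_t r t); exact this
    have hh : pt f r t = fderiv ℝ F (r, t) (0, 1) := h.deriv
    rw [hh]; exact h
  · have h1 : HasDerivAt (fun x : ℝ => fderiv ℝ F (x, t)) (H (1, 0)) r :=
      hH.comp_hasDerivAt r (curve_r t r)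
    have h2 : HasDerivAt (fun x : ℝ => fderiv ℝ F (x, t) ((1:ℝ), 0))
        (H (1, 0) ((1:ℝ), 0) + fderiv ℝ F (r, t) 0) r :=
      h1.clm_apply (hasDerivAt_const r _)
    simp only [map_zero, add_zero] at h2
    refine h2.congr_of_eventuallyEq ?_
    exact (curve_r t r).continuousAt.tendsto.eventually hpr_ev
  · have h1 : HasDerivAt (fun x : ℝ => fderiv ℝ F (x, t)) (H (1, 0)) r :=
      hH.comp_hasDerivAt r (curve_r t r)
    have h2 : HasDerivAt (fun x : ℝ => fderiv ℝ F (x, t) ((0:ℝ), 1))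
        (H (1, 0) ((0:ℝ), 1) + fderiv ℝ F (r, t) 0) r :=
      h1.clm_apply (hasDerivAt_const r _)
    simp only [map_zero, add_zero] at h2
    refine h2.congr_of_eventuallyEq ?_
    exact (curve_r t r).continuousAt.tendsto.eventually hpt_ev
  · have h1 : HasDerivAt (fun s : ℝ => fderiv ℝ F (r, s)) (H (0, 1)) t :=
      hH.comp_hasDerivAt t (curve_t r t)
    have h2 : HasDerivAt (fun s : ℝ => fderiv ℝ F (r, s) ((1:ℝ), 0))
        (H (0, 1) ((1:ℝ), 0) + fderiv ℝ F (r, t) 0) t :=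
      h1.clm_apply (hasDerivAt_const t _)
    simp only [map_zero, add_zero] at h2
    rw [show H (1, 0) (0, 1) = H (0, 1) (1, 0) from hsymm _ _]
    refine h2.congr_of_eventuallyEq ?_
    exact (curve_t r t).continuousAt.tendsto.eventually hpr_ev
  · have h1 : HasDerivAt (fun s : ℝ => fderiv ℝ F (r, s)) (H (0, 1)) t :=
      hH.comp_hasDerivAt t (curve_t r t)
    have h2 : HasDerivAt (fun s : ℝ => fderiv ℝ F (r, s) ((0:ℝ), 1))
        (H (0, 1) ((0:ℝ), 1) + fderiv ℝ F (r, t) 0) t :=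
      h1.clm_apply (hasDerivAt_const t _)
    simp only [map_zero, add_zero] at h2
    refine h2.congr_of_eventuallyEq ?_
    exact (curve_t r t).continuousAt.tendsto.eventually hpt_ev

/-- If `(μ, ω)` is a `C²` solution of the Einstein–Rosen field system on
`D = {(r,t) : r > 0}`, then the differential form `F dr + G dt` with
`F = r(μ_t² + μ_r²) + (e^{4μ}/(4r))(ω_t² + ω_r²)` and
`G = 2r μ_t μ_r + (1/(2r)) e^{4μ} ω_r ω_t` is closed, i.e. `F_t - G_r = 0` on `D`. -/
theorem closedness_of_nu_form (μ ω : ℝ → ℝ → ℝ)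
    (hμ : ContDiffOn ℝ 2 (fun p : ℝ × ℝ => μ p.1 p.2) {p : ℝ × ℝ | 0 < p.1})
    (hω : ContDiffOn ℝ 2 (fun p : ℝ × ℝ => ω p.1 p.2) {p : ℝ × ℝ | 0 < p.1})
    (heq1 : ∀ r t : ℝ, 0 < r →
      pt (pt ω) r t - pr (pr ω) r t + pr ω r t / r
        = 4 * (pr μ r t * pr ω r t - pt μ r t * pt ω r t))
    (heq2 : ∀ r t : ℝ, 0 < r →
      pt (pt μ) r t - pr (pr μ) r t - pr μ r t / r
        = Real.exp (4 * μ r t) / (2 * r ^ 2) * ((pt ω r t) ^ 2 - (pr ω r t) ^ 2)) :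
    ∀ r t : ℝ, 0 < r →
      pt (fun x s => x * ((pt μ x s) ^ 2 + (pr μ x s) ^ 2)
          + Real.exp (4 * μ x s) / (4 * x) * ((pt ω x s) ^ 2 + (pr ω x s) ^ 2)) r t
      - pr (fun x s => 2 * x * pt μ x s * pr μ x s
          + 1 / (2 * x) * Real.exp (4 * μ x s) * pr ω x s * pt ω x s) r t = 0 := by
  intro r t hr
  obtain ⟨Aμ, Bμ, Cμ, hμr, hμt, hμrr, hμtr, hμrt, hμtt⟩ := partials μ hμ hr
  obtain ⟨Aω, Bω, Cω, hωr, hωt, hωrr, hωtr, hωrt, hωtt⟩ := partials ω hω hr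
  have e1 := heq1 r t hr
  have e2 := heq2 r t hr
  rw [show pt (pt ω) r t = Bω from hωtt.deriv, show pr (pr ω) r t = Aω from hωrr.deriv] at e1
  rw [show pt (pt μ) r t = Bμ from hμtt.deriv, show pr (pr μ) r t = Aμ from hμrr.deriv] at e2
  -- derivative of F in t
  have hexp_t : HasDerivAt (fun s => Real.exp (4 * μ r s))
      (Real.exp (4 * μ r t) * (4 * pt μ r t)) t := (hμt.const_mul 4).exp
  have hFt : HasDerivAt (fun s => r * ((pt μ r s) ^ 2 + (pr μ r s) ^ 2)
      + Real.exp (4 * μ r s) / (4 * r) * ((pt ω r s) ^ 2 + (pr ω r s) ^ 2))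
      (r * (2 * pt μ r t ^ 1 * Bμ + 2 * pr μ r t ^ 1 * Cμ)
        + ((Real.exp (4 * μ r t) * (4 * pt μ r t)) / (4 * r) * ((pt ω r t) ^ 2 + (pr ω r t) ^ 2)
          + Real.exp (4 * μ r t) / (4 * r) * (2 * pt ω r t ^ 1 * Bω + 2 * pr ω r t ^ 1 * Cω))) t :=
    (((hμtt.pow 2).add (hμrt.pow 2)).const_mul r).add
      ((hexp_t.div_const (4 * r)).mul ((hωtt.pow 2).add (hωrt.pow 2)))
  -- derivative of G in r
  have hlin : HasDerivAt (fun x : ℝ => 2 * x) 2 r := by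
    simpa using (hasDerivAt_id r).const_mul 2
  have hden : HasDerivAt (fun x : ℝ => 1 / (2 * x))
      ((0 * (2 * r) - 1 * 2) / (2 * r) ^ 2) r :=
    (hasDerivAt_const r 1).div hlin (by positivity)
  have hexp_r : HasDerivAt (fun x => Real.exp (4 * μ x t))
      (Real.exp (4 * μ r t) * (4 * pr μ r t)) r := (hμr.const_mul 4).exp
  have hGr : HasDerivAt (fun x => 2 * x * pt μ x t * pr μ x t
      + 1 / (2 * x) * Real.exp (4 * μ x t) * pr ω x t * pt ω x t)
      (((2 * pt μ r t + 2 * r * Cμ) * pr μ r t + 2 * r * pt μ r t * Aμ)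
        + ((((0 * (2 * r) - 1 * 2) / (2 * r) ^ 2 * Real.exp (4 * μ r t)
              + 1 / (2 * r) * (Real.exp (4 * μ r t) * (4 * pr μ r t))) * pr ω r t
            + 1 / (2 * r) * Real.exp (4 * μ r t) * Aω) * pt ω r t
          + 1 / (2 * r) * Real.exp (4 * μ r t) * pr ω r t * Cω)) r :=
    (((hlin.mul hμtr).mul hμrr)).add ((((hden.mul hexp_r).mul hωrr)).mul hωtr)
  rw [pt, pr]
  rw [show (fun s => (fun x s => x * ((pt μ x s) ^ 2 + (pr μ x s) ^ 2)
      + Real.exp (4 * μ x s) / (4 * x) * ((pt ω x s) ^ 2 + (pr ω x s) ^ 2)) r s)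
      = (fun s => r * ((pt μ r s) ^ 2 + (pr μ r s) ^ 2)
      + Real.exp (4 * μ r s) / (4 * r) * ((pt ω r s) ^ 2 + (pr ω r s) ^ 2)) from rfl]
  rw [show (fun x => (fun x s => 2 * x * pt μ x s * pr μ x s
      + 1 / (2 * x) * Real.exp (4 * μ x s) * pr ω x s * pt ω x s) x t)
      = (fun x => 2 * x * pt μ x t * pr μ x t
      + 1 / (2 * x) * Real.exp (4 * μ x t) * pr ω x t * pt ω x t) from rfl]
  rw [hFt.deriv, hGr.deriv]
  have hBμ : Bμ = Aμ + pr μ r t / r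
      + Real.exp (4 * μ r t) / (2 * r ^ 2) * ((pt ω r t) ^ 2 - (pr ω r t) ^ 2) := by linarith
  have hBω : Bω = Aω - pr ω r t / r
      + 4 * (pr μ r t * pr ω r t - pt μ r t * pt ω r t) := by linarith
  rw [hBμ, hBω]
  have hrne : r ≠ 0 := ne_of_gt hr
  field_simp
  ring
end

section
/- Let γ ∈ ℝ, let I ⊆ ℝ be an open interval, and let Ψ : I → ℝ be a C¹ function satisfying the ordinary differential equation Ψ'(x) = (x + γ) e^{2Ψ(x)} for all x ∈ I. Let D = {(r,t) ∈ ℝ² : r > 0} and let φ : D → ℝ be a C² function with values in I satisfying on D the equation ∂/∂r(r e^{2Ψ(φ)} φ_r) − ∂/∂t(r e^{2Ψ(φ)} φ_t) = 0. Then the function ψ = Ψ ∘ φ satisfies on D the equation ∂/∂r(r(ψ_r − φ e^{2ψ} φ_r)) − ∂/∂t(r(ψ_t − φ e^{2ψ} φ_t)) = 0. -/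
/-- The functional-relation ansatz: if `Ψ` is a `C¹` solution of the ODE
`Ψ'(x) = (x + γ) e^{2Ψ(x)}` on an open interval `I`, and `φ` is a `C²`
solution, with values in `I`, of `(r e^{2Ψ(φ)} φ_r)_r − (r e^{2Ψ(φ)} φ_t)_t = 0`
on `D = {r > 0}`, then `ψ = Ψ ∘ φ` satisfies
`(r(ψ_r − φ e^{2ψ} φ_r))_r − (r(ψ_t − φ e^{2ψ} φ_t))_t = 0` on `D`. -/
theorem functional_relation_ansatz (γ : ℝ) (I : Set ℝ) (hIopen : IsOpen I)
    (hIinterval : I.OrdConnected) (Ψ : ℝ → ℝ)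
    (hΨ : ContDiffOn ℝ 1 Ψ I)
    (hODE : ∀ x ∈ I, deriv Ψ x = (x + γ) * Real.exp (2 * Ψ x))
    (φ : ℝ → ℝ → ℝ)
    (hφ : ContDiffOn ℝ 2 (fun p : ℝ × ℝ => φ p.1 p.2) {p : ℝ × ℝ | 0 < p.1})
    (hrange : ∀ r t : ℝ, 0 < r → φ r t ∈ I)
    (heq : ∀ r t : ℝ, 0 < r →
      pr (fun x s => x * Real.exp (2 * Ψ (φ x s)) * pr φ x s) r t
        - pt (fun x s => x * Real.exp (2 * Ψ (φ x s)) * pt φ x s) r t = 0) :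
    ∀ r t : ℝ, 0 < r →
      pr (fun x s => x * (pr (fun y u => Ψ (φ y u)) x s
            - φ x s * Real.exp (2 * Ψ (φ x s)) * pr φ x s)) r t
        - pt (fun x s => x * (pt (fun y u => Ψ (φ y u)) x s
            - φ x s * Real.exp (2 * Ψ (φ x s)) * pt φ x s)) r t = 0 := by
  have hDopen : IsOpen {p : ℝ × ℝ | 0 < p.1} := isOpen_lt continuous_const continuous_fst
  have hφd : DifferentiableOn ℝ (fun p : ℝ × ℝ => φ p.1 p.2) {p : ℝ × ℝ | 0 < p.1} :=
    hφ.differentiableOn (by norm_num)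
  -- differentiability of x ↦ φ x s at x > 0
  have hφx : ∀ x s : ℝ, 0 < x → DifferentiableAt ℝ (fun y => φ y s) x := by
    intro x s hx
    have h1 : DifferentiableAt ℝ (fun p : ℝ × ℝ => φ p.1 p.2) (x, s) :=
      hφd.differentiableAt (hDopen.mem_nhds hx)
    exact h1.comp x (differentiableAt_id.prodMk (differentiableAt_const s) : DifferentiableAt ℝ (fun y : ℝ => (y, s)) x)
  -- key pointwise identity
  have key : ∀ x s : ℝ, 0 < x →
      x * (pr (fun y u => Ψ (φ y u)) x s
            - φ x s * Real.exp (2 * Ψ (φ x s)) * pr φ x s)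
        = γ * (x * Real.exp (2 * Ψ (φ x s)) * pr φ x s) := by
    intro x s hx
    have hmem : φ x s ∈ I := hrange x s hx
    have hΨd : DifferentiableAt ℝ Ψ (φ x s) :=
      (hΨ.differentiableOn one_ne_zero).differentiableAt (hIopen.mem_nhds hmem)
    have hc : pr (fun y u => Ψ (φ y u)) x s = deriv Ψ (φ x s) * pr φ x s := by
      have := deriv_comp x hΨd (hφx x s hx)
      simpa [pr, Function.comp_def] using this
    rw [hc, hODE _ hmem]
    ring
  intro r t hr
  -- r-derivative part
  have hpr : pr (fun x s => x * (pr (fun y u => Ψ (φ y u)) x s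
            - φ x s * Real.exp (2 * Ψ (φ x s)) * pr φ x s)) r t
      = γ * pr (fun x s => x * Real.exp (2 * Ψ (φ x s)) * pr φ x s) r t := by
    have hev : (fun x => x * (pr (fun y u => Ψ (φ y u)) x t
            - φ x t * Real.exp (2 * Ψ (φ x t)) * pr φ x t))
        =ᶠ[nhds r] (fun x => γ * (x * Real.exp (2 * Ψ (φ x t)) * pr φ x t)) := by
      filter_upwards [(isOpen_lt continuous_const continuous_id).mem_nhds hr] with x hx
      exact key x t hx
    show deriv (fun x => x * (pr (fun y u => Ψ (φ y u)) x t
            - φ x t * Real.exp (2 * Ψ (φ x t)) * pr φ x t)) r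
        = γ * deriv (fun x => x * Real.exp (2 * Ψ (φ x t)) * pr φ x t) r
    rw [hev.deriv_eq, deriv_const_mul_field]
  -- t-derivative part
  have hpt : pt (fun x s => x * (pt (fun y u => Ψ (φ y u)) x s
            - φ x s * Real.exp (2 * Ψ (φ x s)) * pt φ x s)) r t
      = γ * pt (fun x s => x * Real.exp (2 * Ψ (φ x s)) * pt φ x s) r t := by
    have heqfun : (fun s => r * (pt (fun y u => Ψ (φ y u)) r s
            - φ r s * Real.exp (2 * Ψ (φ r s)) * pt φ r s))
        = (fun s => γ * (r * Real.exp (2 * Ψ (φ r s)) * pt φ r s)) := by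
      funext s
      have hmem : φ r s ∈ I := hrange r s hr
      have hΨd : DifferentiableAt ℝ Ψ (φ r s) :=
        (hΨ.differentiableOn one_ne_zero).differentiableAt (hIopen.mem_nhds hmem)
      have hφt : DifferentiableAt ℝ (fun u => φ r u) s := by
        have h1 : DifferentiableAt ℝ (fun p : ℝ × ℝ => φ p.1 p.2) (r, s) :=
          hφd.differentiableAt (hDopen.mem_nhds hr)
        exact h1.comp s ((differentiableAt_const r).prodMk differentiableAt_id)
      have hc : pt (fun y u => Ψ (φ y u)) r s = deriv Ψ (φ r s) * pt φ r s := by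
        have := deriv_comp s hΨd hφt
        simpa [pt, Function.comp_def] using this
      rw [hc, hODE _ hmem]
      ring
    show deriv (fun s => r * (pt (fun y u => Ψ (φ y u)) r s
            - φ r s * Real.exp (2 * Ψ (φ r s)) * pt φ r s)) t
        = γ * deriv (fun s => r * Real.exp (2 * Ψ (φ r s)) * pt φ r s) t
    rw [heqfun, deriv_const_mul_field]
  rw [hpr, hpt, ← mul_sub, heq r t hr, mul_zero]
end

section
/- Let γ, C ∈ ℝ with C < γ², let D = {(r,t) ∈ ℝ² : r > 0}, and let θ : D → ℝ be a C² function satisfying the cylindrical wave equation (1/r)(r θ_r)_r − θ_tt = 0 on D. Define φ : D → ℝ by φ(r,t) = ((√(γ² − C) − γ) e^{2√(γ² − C) θ(r,t)} − (√(γ² − C) + γ))/(e^{2√(γ² − C) θ(r,t)} + 1). Then for every (r,t) ∈ D one has φ(r,t)² + 2γφ(r,t) + C < 0, so that ψ : D → ℝ given by ψ(r,t) = −(1/2) log(−(φ(r,t)² + 2γφ(r,t) + C)) is well defined, and the pair (ψ, φ) satisfies on D the Einstein–Rosen system ψ_tt − (1/r)(r ψ_r)_r = e^{2ψ}(φ_t²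 − φ_r²) and (e^{2ψ} φ_t)_t − (1/r)(r e^{2ψ} φ_r)_r = 0. -/
lemma ER_tanh_hasDerivAt (k : ℝ) {u : ℝ → ℝ} {u' x : ℝ} (hu : HasDerivAt u u' x) :
    HasDerivAt (fun y => k * Real.sinh (k * u y) / Real.cosh (k * u y))
      (k ^ 2 / Real.cosh (k * u x) ^ 2 * u') x := by
  have hc : Real.cosh (k * u x) ≠ 0 := (Real.cosh_pos _).ne'
  have hku : HasDerivAt (fun y => k * u y) (k * u') x := hu.const_mul k
  have hs : HasDerivAt (fun y => Real.sinh (k * u y)) (Real.cosh (k * u x) * (k * u')) x :=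
    hku.sinh
  have hcc : HasDerivAt (fun y => Real.cosh (k * u y)) (Real.sinh (k * u x) * (k * u')) x :=
    hku.cosh
  have hdiv := (hs.const_mul k).div hcc hc
  convert hdiv using 1 <;> try rfl
  have h1 := Real.cosh_sq (k * u x)
  field_simp
  linear_combination (-(k ^ 2 * u')) * h1

lemma ER_logcosh_hasDerivAt (k : ℝ) {u : ℝ → ℝ} {u' x : ℝ} (hu : HasDerivAt u u' x) :
    HasDerivAt (fun y => Real.log (Real.cosh (k * u y)) - Real.log k)
      (k * Real.sinh (k * u x) / Real.cosh (k * u x) * u') x := by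
  have hc : Real.cosh (k * u x) ≠ 0 := (Real.cosh_pos _).ne'
  have hku : HasDerivAt (fun y => k * u y) (k * u') x := hu.const_mul k
  have hcc : HasDerivAt (fun y => Real.cosh (k * u y)) (Real.sinh (k * u x) * (k * u')) x :=
    hku.cosh
  have := (hcc.log hc).sub_const (Real.log k)
  convert this using 1 <;> try rfl
  ring

/-- A class of exact, globally defined solutions of the Einstein–Rosen system:
if `θ` is a `C²` solution of the cylindrical wave equation `(1/r)(r θ_r)_r − θ_tt = 0`
on `D = {r > 0}` and `C < γ²`, then with
`φ = ((√(γ²−C) − γ) e^{2√(γ²−C) θ} − (√(γ²−C) + γ))/(e^{2√(γ²−C) θ} + 1)` one has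
`φ² + 2γφ + C < 0` on `D`, so `ψ = −(1/2) log(−(φ² + 2γφ + C))` is well defined,
and `(ψ, φ)` solves `ψ_tt − (1/r)(r ψ_r)_r = e^{2ψ}(φ_t² − φ_r²)`,
`(e^{2ψ} φ_t)_t − (1/r)(r e^{2ψ} φ_r)_r = 0` on `D`. -/
theorem exact_solutions_from_wave_equation (γ C : ℝ) (hC : C < γ ^ 2)
    (θ φ ψ : ℝ → ℝ → ℝ)
    (hθ : ContDiffOn ℝ 2 (fun p : ℝ × ℝ => θ p.1 p.2) {p : ℝ × ℝ | 0 < p.1})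
    (hwave : ∀ r t : ℝ, 0 < r →
      pr (fun x s => x * pr θ x s) r t / r - pt (pt θ) r t = 0)
    (hφ : ∀ r t : ℝ, φ r t =
      ((Real.sqrt (γ ^ 2 - C) - γ) * Real.exp (2 * Real.sqrt (γ ^ 2 - C) * θ r t)
        - (Real.sqrt (γ ^ 2 - C) + γ))
      / (Real.exp (2 * Real.sqrt (γ ^ 2 - C) * θ r t) + 1))
    (hψ : ∀ r t : ℝ, ψ r t =
      -(1 / 2) * Real.log (-((φ r t) ^ 2 + 2 * γ * φ r t + C))) :
    ∀ r t : ℝ, 0 < r →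
      (φ r t) ^ 2 + 2 * γ * φ r t + C < 0 ∧
      pt (pt ψ) r t - pr (fun x s => x * pr ψ x s) r t / r
        = Real.exp (2 * ψ r t) * ((pt φ r t) ^ 2 - (pr φ r t) ^ 2) ∧
      pt (fun x s => Real.exp (2 * ψ x s) * pt φ x s) r t
        - pr (fun x s => x * Real.exp (2 * ψ x s) * pr φ x s) r t / r = 0 := by
  set k := Real.sqrt (γ ^ 2 - C) with hkdef
  have hk2 : k ^ 2 = γ ^ 2 - C := Real.sq_sqrt (by linarith)
  have hk : 0 < k := Real.sqrt_pos.2 (by linarith)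
  have hk0 : k ≠ 0 := ne_of_gt hk
  -- pointwise identities
  have hφ' : ∀ x y : ℝ, φ x y = k * Real.sinh (k * θ x y) / Real.cosh (k * θ x y) - γ := by
    intro x y
    have hE : (0:ℝ) < Real.exp (k * θ x y) := Real.exp_pos _
    have hE2 : Real.exp (2 * k * θ x y) = Real.exp (k * θ x y) ^ 2 := by
      rw [sq, ← Real.exp_add]; ring_nf
    have hc : (0:ℝ) < Real.cosh (k * θ x y) := Real.cosh_pos _
    rw [hφ x y, hE2, Real.sinh_eq, Real.cosh_eq, Real.exp_neg] at *
    have hden : Real.exp (k * θ x y) ^ 2 + 1 ≠ 0 := by positivity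
    field_simp
    ring
  have hneg : ∀ x y : ℝ, φ x y ^ 2 + 2 * γ * φ x y + C
      = -(k ^ 2 / Real.cosh (k * θ x y) ^ 2) := by
    intro x y
    have hc : (0:ℝ) < Real.cosh (k * θ x y) := Real.cosh_pos _
    have hsq := Real.cosh_sq (k * θ x y)
    have hc0 : Real.cosh (k * θ x y) ≠ 0 := ne_of_gt hc
    rw [hφ' x y]
    have e1 : (k * Real.sinh (k * θ x y) / Real.cosh (k * θ x y) - γ) ^ 2
        + 2 * γ * (k * Real.sinh (k * θ x y) / Real.cosh (k * θ x y) - γ) + C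
        = k ^ 2 * Real.sinh (k * θ x y) ^ 2 / Real.cosh (k * θ x y) ^ 2 - (γ ^ 2 - C) := by
      field_simp
      ring
    rw [e1, ← hk2]
    field_simp
    linear_combination (-1) * hsq
  have hψ' : ∀ x y : ℝ, ψ x y = Real.log (Real.cosh (k * θ x y)) - Real.log k := by
    intro x y
    have hc : (0:ℝ) < Real.cosh (k * θ x y) := Real.cosh_pos _
    rw [hψ x y, hneg x y, neg_neg, Real.log_div (by positivity) (by positivity),
      Real.log_pow, Real.log_pow]
    push_cast
    ring
  have hexp : ∀ x y : ℝ, Real.exp (2 * ψ x y) = Real.cosh (k * θ x y) ^ 2 / k ^ 2 := by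
    intro x y
    have hc : (0:ℝ) < Real.cosh (k * θ x y) := Real.cosh_pos _
    rw [hψ' x y, show 2 * (Real.log (Real.cosh (k * θ x y)) - Real.log k)
        = (Real.log (Real.cosh (k * θ x y)) - Real.log k)
          + (Real.log (Real.cosh (k * θ x y)) - Real.log k) by ring,
      Real.exp_add, Real.exp_sub, Real.exp_log hc, Real.exp_log hk]
    ring
  intro r t hr
  have hr0 : r ≠ 0 := ne_of_gt hr
  -- smoothness along lines
  have hgC : ContDiff ℝ 2 (fun s => θ r s) := by
    rw [← contDiffOn_univ]
    exact hθ.comp ((contDiff_const.prodMk contDiff_id).contDiffOn) fun s _ => hr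
  have hgd : Differentiable ℝ (fun s => θ r s) := hgC.differentiable (by norm_num)
  have h21 : (2 : WithTop ℕ∞) = 1 + 1 := by norm_num
  have hg1d : Differentiable ℝ (deriv fun s => θ r s) :=
    ((contDiff_succ_iff_deriv.mp (h21 ▸ hgC)).2.2).differentiable one_ne_zero
  have hhC : ContDiffOn ℝ 2 (fun x => θ x t) (Set.Ioi 0) :=
    hθ.comp ((contDiff_id.prodMk contDiff_const).contDiffOn) fun x hx => hx
  have hh1C : ContDiffOn ℝ 1 (deriv fun x => θ x t) (Set.Ioi 0) :=
    hhC.deriv_of_isOpen isOpen_Ioi (by norm_num)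
  have hmem : Set.Ioi (0:ℝ) ∈ nhds r := isOpen_Ioi.mem_nhds hr
  have hhd : ∀ x ∈ Set.Ioi (0:ℝ), HasDerivAt (fun x => θ x t) (deriv (fun x => θ x t) x) x :=
    fun x hx => ((hhC.differentiableOn (by norm_num)).differentiableAt
      (isOpen_Ioi.mem_nhds hx)).hasDerivAt
  have hh1d : HasDerivAt (deriv fun x => θ x t) (deriv (deriv fun x => θ x t) r) r :=
    ((hh1C.differentiableOn one_ne_zero).differentiableAt hmem).hasDerivAt
  -- first partials of φ and ψ
  have hptφ : ∀ s : ℝ, pt φ r s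
      = k ^ 2 / Real.cosh (k * θ r s) ^ 2 * deriv (fun x => θ r x) s := by
    intro s
    have hds : HasDerivAt (fun x => θ r x) (deriv (fun x => θ r x) s) s := (hgd s).hasDerivAt
    have heq : (fun x => φ r x)
        = fun x => k * Real.sinh (k * θ r x) / Real.cosh (k * θ r x) - γ :=
      funext fun x => hφ' r x
    show deriv (fun x => φ r x) s = _
    rw [heq]
    exact ((ER_tanh_hasDerivAt k hds).sub_const γ).deriv
  have hprφ : ∀ x ∈ Set.Ioi (0:ℝ), pr φ x t
      = k ^ 2 / Real.cosh (k * θ x t) ^ 2 * deriv (fun y => θ y t) x := by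
    intro x hx
    have heq : (fun y => φ y t)
        = fun y => k * Real.sinh (k * θ y t) / Real.cosh (k * θ y t) - γ :=
      funext fun y => hφ' y t
    show deriv (fun y => φ y t) x = _
    rw [heq]
    exact ((ER_tanh_hasDerivAt k (hhd x hx)).sub_const γ).deriv
  have hptψ : ∀ s : ℝ, pt ψ r s
      = k * Real.sinh (k * θ r s) / Real.cosh (k * θ r s) * deriv (fun x => θ r x) s := by
    intro s
    have hds : HasDerivAt (fun x => θ r x) (deriv (fun x => θ r x) s) s := (hgd s).hasDerivAt
    have heq : (fun x => ψ r x)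
        = fun x => Real.log (Real.cosh (k * θ r x)) - Real.log k :=
      funext fun x => hψ' r x
    show deriv (fun x => ψ r x) s = _
    rw [heq]
    exact (ER_logcosh_hasDerivAt k hds).deriv
  have hprψ : ∀ x ∈ Set.Ioi (0:ℝ), pr ψ x t
      = k * Real.sinh (k * θ x t) / Real.cosh (k * θ x t) * deriv (fun y => θ y t) x := by
    intro x hx
    have heq : (fun y => ψ y t)
        = fun y => Real.log (Real.cosh (k * θ y t)) - Real.log k :=
      funext fun y => hψ' y t
    show deriv (fun y => ψ y t) x = _
    rw [heq]
    exact (ER_logcosh_hasDerivAt k (hhd x hx)).deriv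
  -- wave equation in line-derivative form
  have hWr : pr (fun x s => x * pr θ x s) r t
      = deriv (fun x => θ x t) r + r * deriv (deriv fun x => θ x t) r := by
    show deriv (fun x => x * deriv (fun y => θ y t) x) r = _
    have H : HasDerivAt (fun x => x * deriv (fun y => θ y t) x)
        (1 * deriv (fun x => θ x t) r + r * deriv (deriv fun x => θ x t) r) r :=
      (hasDerivAt_id r).mul hh1d
    rw [H.deriv]
    ring
  have hWt : pt (pt θ) r t = deriv (deriv fun x => θ r x) t := rfl
  have hwave' : (deriv (fun x => θ x t) r + r * deriv (deriv fun x => θ x t) r) / r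
      - deriv (deriv fun x => θ r x) t = 0 := by
    have := hwave r t hr
    rw [hWr, hWt] at this
    exact this
  refine ⟨?_, ?_, ?_⟩
  · rw [hneg r t]
    have hc : (0:ℝ) < Real.cosh (k * θ r t) := Real.cosh_pos _
    have : 0 < k ^ 2 / Real.cosh (k * θ r t) ^ 2 := by positivity
    linarith
  · -- first ER equation
    have hA : pt (pt ψ) r t
        = k ^ 2 / Real.cosh (k * θ r t) ^ 2 * deriv (fun x => θ r x) t ^ 2
          + k * Real.sinh (k * θ r t) / Real.cosh (k * θ r t)
            * deriv (deriv fun x => θ r x) t := by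
      have heq : (fun s => pt ψ r s)
          = fun s => k * Real.sinh (k * θ r s) / Real.cosh (k * θ r s)
              * deriv (fun x => θ r x) s := funext hptψ
      show deriv (fun s => pt ψ r s) t = _
      rw [heq]
      have hds : HasDerivAt (fun x => θ r x) (deriv (fun x => θ r x) t) t := (hgd t).hasDerivAt
      have h1 : HasDerivAt (deriv fun x => θ r x) (deriv (deriv fun x => θ r x) t) t :=
        (hg1d t).hasDerivAt
      rw [(show HasDerivAt (fun s => k * Real.sinh (k * θ r s) / Real.cosh (k * θ r s)
          * deriv (fun x => θ r x) s) _ t from (ER_tanh_hasDerivAt k hds).mul h1).deriv]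
      ring
    have hB : pr (fun x s => x * pr ψ x s) r t
        = k * Real.sinh (k * θ r t) / Real.cosh (k * θ r t) * deriv (fun x => θ x t) r
          + r * (k ^ 2 / Real.cosh (k * θ r t) ^ 2 * deriv (fun x => θ x t) r ^ 2
            + k * Real.sinh (k * θ r t) / Real.cosh (k * θ r t)
              * deriv (deriv fun x => θ x t) r) := by
      have heq : ∀ᶠ x in nhds r, x * pr ψ x t
          = x * (k * Real.sinh (k * θ x t) / Real.cosh (k * θ x t)
              * deriv (fun y => θ y t) x) := by
        filter_upwards [hmem] with x hx
        rw [hprψ x hx]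
      show deriv (fun x => x * pr ψ x t) r = _
      rw [Filter.EventuallyEq.deriv_eq heq]
      have H : HasDerivAt (fun x => x * (k * Real.sinh (k * θ x t) / Real.cosh (k * θ x t)
            * deriv (fun y => θ y t) x))
          (1 * (k * Real.sinh (k * θ r t) / Real.cosh (k * θ r t) * deriv (fun y => θ y t) r)
            + r * (k ^ 2 / Real.cosh (k * θ r t) ^ 2 * deriv (fun y => θ y t) r
                * deriv (fun y => θ y t) r
              + k * Real.sinh (k * θ r t) / Real.cosh (k * θ r t)
                * deriv (deriv fun x => θ x t) r)) r :=
        (hasDerivAt_id r).mul ((ER_tanh_hasDerivAt k (hhd r hr)).mul hh1d)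
      rw [H.deriv]
      ring
    rw [hA, hB, hexp r t, hptφ t, hprφ r hr]
    have hc : (0:ℝ) < Real.cosh (k * θ r t) := Real.cosh_pos _
    have hc0 : Real.cosh (k * θ r t) ≠ 0 := ne_of_gt hc
    set c1 := Real.cosh (k * θ r t)
    set s1 := Real.sinh (k * θ r t)
    set A1 := deriv (fun x => θ r x) t
    set A2 := deriv (deriv fun x => θ r x) t
    set B1 := deriv (fun x => θ x t) r
    set B2 := deriv (deriv fun x => θ x t) r
    have key : (B1 + r * B2) / r = A2 := by linarith [hwave']
    have e3 : (k * s1 / c1 * B1 + r * (k ^ 2 / c1 ^ 2 * B1 ^ 2 + k * s1 / c1 * B2)) / r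
        = k ^ 2 / c1 ^ 2 * B1 ^ 2 + k * s1 / c1 * ((B1 + r * B2) / r) := by
      field_simp
      ring
    have e2 : c1 ^ 2 / k ^ 2 * ((k ^ 2 / c1 ^ 2 * A1) ^ 2 - (k ^ 2 / c1 ^ 2 * B1) ^ 2)
        = k ^ 2 / c1 ^ 2 * A1 ^ 2 - k ^ 2 / c1 ^ 2 * B1 ^ 2 := by
      field_simp
    rw [e3, e2, key]
    ring
  · -- second ER equation
    have hTt : pt (fun x s => Real.exp (2 * ψ x s) * pt φ x s) r t
        = deriv (deriv fun x => θ r x) t := by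
      have heq1 : (fun s => Real.exp (2 * ψ r s) * pt φ r s) = deriv (fun x => θ r x) := by
        funext s
        rw [hexp r s, hptφ s]
        have hc : Real.cosh (k * θ r s) ≠ 0 := (Real.cosh_pos _).ne'
        field_simp
      show deriv (fun s => Real.exp (2 * ψ r s) * pt φ r s) t = _
      rw [heq1]
    have hTr : pr (fun x s => x * Real.exp (2 * ψ x s) * pr φ x s) r t
        = deriv (fun x => θ x t) r + r * deriv (deriv fun x => θ x t) r := by
      have heq2 : ∀ᶠ x in nhds r, x * Real.exp (2 * ψ x t) * pr φ x t
          = x * deriv (fun y => θ y t) x := by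
        filter_upwards [hmem] with x hx
        rw [hexp x t, hprφ x hx]
        have hc : Real.cosh (k * θ x t) ≠ 0 := (Real.cosh_pos _).ne'
        field_simp
      show deriv (fun x => x * Real.exp (2 * ψ x t) * pr φ x t) r = _
      rw [Filter.EventuallyEq.deriv_eq heq2]
      have H : HasDerivAt (fun x => x * deriv (fun y => θ y t) x)
          (1 * deriv (fun x => θ x t) r + r * deriv (deriv fun x => θ x t) r) r :=
        (hasDerivAt_id r).mul hh1d
      rw [H.deriv]
      ring
    rw [hTt, hTr]
    field_simp at hwave' ⊢
    linarith
end

section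
/- Let 0 < R₁ < R₂ and b, c ∈ ℝ. Let φ, ψ : [R₁,R₂] → ℝ be C² functions satisfying on (R₁,R₂) the stationary system (r e^{2ψ(r)} φ'(r))' = 0 and (1/r)(r ψ'(r))' = e^{2ψ(r)} φ'(r)², with boundary conditions φ(R₁) = 0, φ(R₂) = 0, ψ(R₁) = b, ψ(R₂) = c. Then φ(r) = 0 for all r ∈ [R₁,R₂] and ψ(r) = b + (c − b) · log(r/R₁)/log(R₂/R₁) for all r ∈ [R₁,R₂]. -/
open Set Topology Filter

lemma const_of_deriv_zero_Ioo {a b : ℝ} {f : ℝ → ℝ}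
    (hf : DifferentiableOn ℝ f (Ioo a b))
    (h0 : ∀ x ∈ Ioo a b, deriv f x = 0) :
    ∀ x ∈ Ioo a b, ∀ y ∈ Ioo a b, f x = f y := by
  intro x hx y hy
  refine (convex_Ioo a b).is_const_of_fderivWithin_eq_zero hf (fun z hz => ?_) hx hy
  rw [fderivWithin_of_isOpen isOpen_Ioo hz]
  have hda : DifferentiableAt ℝ f z := (hf z hz).differentiableAt (isOpen_Ioo.mem_nhds hz)
  have : HasDerivAt f 0 z := h0 z hz ▸ hda.hasDerivAt
  have := this.hasFDerivAt.fderiv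
  simpa [ContinuousLinearMap.ext_iff] using this

lemma endpoint_of_const_Ioo {a b k : ℝ} {f : ℝ → ℝ} (hab : a < b)
    (hc : ContinuousOn f (Icc a b)) (h : ∀ x ∈ Ioo a b, f x = k) :
    f a = k ∧ f b = k := by
  have hcl : closure (Ioo a b) = Icc a b := closure_Ioo hab.ne
  constructor
  · have hne : (𝓝[Ioo a b] a).NeBot := by
      rw [← mem_closure_iff_nhdsWithin_neBot, hcl]; exact left_mem_Icc.2 hab.le
    have h1 : Filter.Tendsto f (𝓝[Ioo a b] a) (𝓝 (f a)) :=
      ((hc a (left_mem_Icc.2 hab.le)).mono Ioo_subset_Icc_self)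
    have h2 : Filter.Tendsto f (𝓝[Ioo a b] a) (𝓝 k) := by
      refine Filter.Tendsto.congr' ?_ tendsto_const_nhds
      filter_upwards [self_mem_nhdsWithin] with x hx using (h x hx).symm
    exact tendsto_nhds_unique h1 h2
  · have hne : (𝓝[Ioo a b] b).NeBot := by
      rw [← mem_closure_iff_nhdsWithin_neBot, hcl]; exact right_mem_Icc.2 hab.le
    have h1 : Filter.Tendsto f (𝓝[Ioo a b] b) (𝓝 (f b)) :=
      ((hc b (right_mem_Icc.2 hab.le)).mono Ioo_subset_Icc_self)
    have h2 : Filter.Tendsto f (𝓝[Ioo a b] b) (𝓝 k) := by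
      refine Filter.Tendsto.congr' ?_ tendsto_const_nhds
      filter_upwards [self_mem_nhdsWithin] with x hx using (h x hx).symm
    exact tendsto_nhds_unique h1 h2

/-- Stationary Einstein–Rosen system with `φ(R₁) = φ(R₂) = 0`: the solution is
`φ ≡ 0` and `ψ` the explicit logarithmic harmonic interpolant of `b` and `c`. -/
theorem stationary_trivial_phi (R₁ R₂ b c : ℝ) (hR₁ : 0 < R₁) (hR₁₂ : R₁ < R₂)
    (φ ψ : ℝ → ℝ)
    (hφ : ContDiffOn ℝ 2 φ (Set.Icc R₁ R₂)) (hψ : ContDiffOn ℝ 2 ψ (Set.Icc R₁ R₂))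
    (heq1 : ∀ r ∈ Set.Ioo R₁ R₂,
      deriv (fun x => x * Real.exp (2 * ψ x) * deriv φ x) r = 0)
    (heq2 : ∀ r ∈ Set.Ioo R₁ R₂,
      deriv (fun x => x * deriv ψ x) r / r = Real.exp (2 * ψ r) * (deriv φ r) ^ 2)
    (hφ1 : φ R₁ = 0) (hφ2 : φ R₂ = 0) (hψ1 : ψ R₁ = b) (hψ2 : ψ R₂ = c) :
    ∀ r ∈ Set.Icc R₁ R₂,
      φ r = 0 ∧ ψ r = b + (c - b) * Real.log (r / R₁) / Real.log (R₂ / R₁) := by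
  have hR₂ : (0:ℝ) < R₂ := hR₁.trans hR₁₂
  have hpos : ∀ x ∈ Ioo R₁ R₂, (0:ℝ) < x := fun x hx => hR₁.trans hx.1
  set L := Real.log (R₂ / R₁) with hL
  have hLpos : 0 < L := Real.log_pos ((one_lt_div hR₁).2 hR₁₂)
  -- differentiability facts on the open interval
  have hφI : ContDiffOn ℝ 2 φ (Ioo R₁ R₂) := hφ.mono Ioo_subset_Icc_self
  have hψI : ContDiffOn ℝ 2 ψ (Ioo R₁ R₂) := hψ.mono Ioo_subset_Icc_self
  have hφd : DifferentiableOn ℝ φ (Ioo R₁ R₂) := hφI.differentiableOn two_ne_zero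
  have hψd : DifferentiableOn ℝ ψ (Ioo R₁ R₂) := hψI.differentiableOn two_ne_zero
  have hdφ : DifferentiableOn ℝ (deriv φ) (Ioo R₁ R₂) :=
    (hφI.deriv_of_isOpen isOpen_Ioo (by norm_num)).differentiableOn one_ne_zero
  have hdψ : DifferentiableOn ℝ (deriv ψ) (Ioo R₁ R₂) :=
    (hψI.deriv_of_isOpen isOpen_Ioo (by norm_num)).differentiableOn one_ne_zero
  -- Step 1: F := r e^{2ψ} φ' is constant on the open interval
  have hFd : DifferentiableOn ℝ (fun x => x * Real.exp (2 * ψ x) * deriv φ x) (Ioo R₁ R₂) :=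
    ((differentiableOn_id.mul (hψd.const_mul 2).exp).mul hdφ)
  have hFconst := const_of_deriv_zero_Ioo hFd heq1
  -- Rolle: φ' vanishes somewhere
  obtain ⟨x₀, hx₀, hd0⟩ := exists_deriv_eq_zero hR₁₂ (hφ.continuousOn) (hφ1.trans hφ2.symm)
  have hF0 : ∀ x ∈ Ioo R₁ R₂, x * Real.exp (2 * ψ x) * deriv φ x = 0 := by
    intro x hx
    have := hFconst x hx x₀ hx₀
    simpa [hd0] using this
  have hφ0 : ∀ x ∈ Ioo R₁ R₂, deriv φ x = 0 := by
    intro x hx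
    have hx0 : x * Real.exp (2 * ψ x) ≠ 0 :=
      mul_ne_zero (hpos x hx).ne' (Real.exp_ne_zero _)
    have := hF0 x hx
    rw [mul_assoc] at this  -- careful
    have h2 := (mul_eq_zero.1 this).resolve_left (hpos x hx).ne'
    exact (mul_eq_zero.1 h2).resolve_left (Real.exp_ne_zero _)
  -- phi constant on Ioo, hence identically 0
  have hφconst := const_of_deriv_zero_Ioo hφd hφ0
  have hφzero : ∀ x ∈ Ioo R₁ R₂, φ x = 0 := by
    intro x hx
    have hend := endpoint_of_const_Ioo (k := φ x) hR₁₂ hφ.continuousOn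
      (fun y hy => hφconst y hy x hx)
    rw [hφ1] at hend
    exact hend.1.symm
  -- (r ψ')' = 0 on Ioo
  have hψ0 : ∀ r ∈ Ioo R₁ R₂, deriv (fun x => x * deriv ψ x) r = 0 := by
    intro r hr
    have h := heq2 r hr
    rw [hφ0 r hr] at h
    have h' : deriv (fun x => x * deriv ψ x) r / r = 0 := by simpa using h
    exact (div_eq_zero_iff.1 h').resolve_right (hpos r hr).ne'
  have hGd : DifferentiableOn ℝ (fun x => x * deriv ψ x) (Ioo R₁ R₂) :=
    differentiableOn_id.mul hdψ
  have hGconst := const_of_deriv_zero_Ioo hGd hψ0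
  set x₁ := (R₁ + R₂)/2 with hx₁def
  have hx₁ : x₁ ∈ Ioo R₁ R₂ := ⟨by simp only [hx₁def]; linarith, by simp only [hx₁def]; linarith⟩
  set m := x₁ * deriv ψ x₁ with hm
  have hGm : ∀ r ∈ Ioo R₁ R₂, deriv ψ r = m / r := by
    intro r hr
    have h := hGconst r hr x₁ hx₁
    rw [eq_div_iff (hpos r hr).ne']
    linarith [h]
  -- h := ψ - m log is constant on Ioo
  have hhd : DifferentiableOn ℝ (fun x => ψ x - m * Real.log x) (Ioo R₁ R₂) := by
    refine hψd.sub ((differentiableOn_const m).mul (fun x hx => ?_))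
    exact (Real.differentiableAt_log (hpos x hx).ne').differentiableWithinAt
  have hh0 : ∀ x ∈ Ioo R₁ R₂, deriv (fun y => ψ y - m * Real.log y) x = 0 := by
    intro x hx
    have hψa : DifferentiableAt ℝ ψ x := (hψd x hx).differentiableAt (isOpen_Ioo.mem_nhds hx)
    have hla : DifferentiableAt ℝ Real.log x := Real.differentiableAt_log (hpos x hx).ne'
    rw [deriv_fun_sub hψa (hla.const_mul m), deriv_const_mul _ hla, Real.deriv_log, hGm x hx]
    field_simp
    simp
  have hhconst := const_of_deriv_zero_Ioo hhd hh0
  set A := ψ x₁ - m * Real.log x₁ with hA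
  have hhA : ∀ x ∈ Ioo R₁ R₂, ψ x - m * Real.log x = A := fun x hx => hhconst x hx x₁ hx₁
  have hccont : ContinuousOn (fun x => ψ x - m * Real.log x) (Icc R₁ R₂) := by
    refine hψ.continuousOn.sub (continuousOn_const.mul (Real.continuousOn_log.mono ?_))
    intro x hx
    exact (hR₁.trans_le hx.1).ne'
  obtain ⟨hE1, hE2⟩ := endpoint_of_const_Ioo hR₁₂ hccont hhA
  rw [hψ1] at hE1
  rw [hψ2] at hE2
  have hlogdiv : Real.log R₂ - Real.log R₁ = L := (Real.log_div hR₂.ne' hR₁.ne').symm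
  have hmL : m * L = c - b := by
    have h := hE1.trans hE2.symm
    have h5 : m * L = m * Real.log R₂ - m * Real.log R₁ := by rw [← hlogdiv]; ring
    linarith
  -- conclusion
  intro r hr
  rcases eq_or_lt_of_le hr.1 with h1 | h1
  · simp [← h1, hφ1, hψ1, div_self hR₁.ne']
  rcases eq_or_lt_of_le hr.2 with h2 | h2
  · subst h2
    refine ⟨hφ2, ?_⟩
    rw [hψ2]
    field_simp
    rw [← hL]; ring
  · have hrI : r ∈ Ioo R₁ R₂ := ⟨h1, h2⟩
    refine ⟨hφzero r hrI, ?_⟩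
    have h3 := hhA r hrI
    have hψr : ψ r = b + m * (Real.log r - Real.log R₁) := by
      have h4 : ψ r - m * Real.log r = b - m * Real.log R₁ := by rw [h3, ← hE1]
      linarith
    have hlog : Real.log (r / R₁) = Real.log r - Real.log R₁ :=
      Real.log_div (hpos r hrI).ne' hR₁.ne'
    rw [hψr, hlog, show c - b = m * L from hmL.symm]
    field_simp [hLpos.ne']
end

section
/- Let 0 < R₁ < R₂, a > 0, b, c ∈ ℝ. Let φ, ψ : [R₁,R₂] → ℝ be C² functions satisfying on (R₁,R₂) the stationary system (r e^{2ψ(r)} φ'(r))' = 0 and (1/r)(r ψ'(r))' = e^{2ψ(r)} φ'(r)², with φ(R₁) = 0, φ(R₂) = a, ψ(R₁) = b, ψ(R₂) = c. Define θ(r) = φ(r)²/2 + (e^{−2ψ(r)} − e^{−2b})/2. Then θ is C², satisfies (r e^{2ψ(r)} θ'(r))' = 0 on (R₁,R₂), and θ(R₁) = 0, θ(R₂) = a²/2 + e^{−2c}/2 − e^{−2b}/2. -/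
/-- The symmetrizing substitution: if `(φ, ψ)` solves the stationary
Einstein–Rosen system, then `θ = φ²/2 + (e^{−2ψ} − e^{−2b})/2` is `C²`, solves
`(r e^{2ψ} θ')' = 0`, and has boundary values `θ(R₁) = 0`,
`θ(R₂) = a²/2 + e^{−2c}/2 − e^{−2b}/2`. -/
theorem symmetrizing_substitution (R₁ R₂ a b c : ℝ) (hR₁ : 0 < R₁) (hR₁₂ : R₁ < R₂)
    (ha : 0 < a) (φ ψ θ : ℝ → ℝ)
    (hφ : ContDiffOn ℝ 2 φ (Set.Icc R₁ R₂)) (hψ : ContDiffOn ℝ 2 ψ (Set.Icc R₁ R₂))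
    (heq1 : ∀ r ∈ Set.Ioo R₁ R₂,
      deriv (fun x => x * Real.exp (2 * ψ x) * deriv φ x) r = 0)
    (heq2 : ∀ r ∈ Set.Ioo R₁ R₂,
      deriv (fun x => x * deriv ψ x) r / r = Real.exp (2 * ψ r) * (deriv φ r) ^ 2)
    (hφ1 : φ R₁ = 0) (hφ2 : φ R₂ = a) (hψ1 : ψ R₁ = b) (hψ2 : ψ R₂ = c)
    (hθ : ∀ r : ℝ, θ r = (φ r) ^ 2 / 2
      + (Real.exp (-(2 * ψ r)) - Real.exp (-(2 * b))) / 2) :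
    ContDiffOn ℝ 2 θ (Set.Icc R₁ R₂) ∧
    (∀ r ∈ Set.Ioo R₁ R₂,
      deriv (fun x => x * Real.exp (2 * ψ x) * deriv θ x) r = 0) ∧
    θ R₁ = 0 ∧
    θ R₂ = a ^ 2 / 2 + Real.exp (-(2 * c)) / 2 - Real.exp (-(2 * b)) / 2 := by
  have hθfun : θ = fun r => (φ r) ^ 2 / 2
      + (Real.exp (-(2 * ψ r)) - Real.exp (-(2 * b))) / 2 := funext hθ
  have hU : IsOpen (Set.Ioo R₁ R₂) := isOpen_Ioo
  have hsub : Set.Ioo R₁ R₂ ⊆ Set.Icc R₁ R₂ := Set.Ioo_subset_Icc_self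
  have hφU : ContDiffOn ℝ 2 φ (Set.Ioo R₁ R₂) := hφ.mono hsub
  have hψU : ContDiffOn ℝ 2 ψ (Set.Ioo R₁ R₂) := hψ.mono hsub
  have hφ'U : ContDiffOn ℝ 1 (deriv φ) (Set.Ioo R₁ R₂) :=
    hφU.deriv_of_isOpen hU (by norm_num)
  have hψ'U : ContDiffOn ℝ 1 (deriv ψ) (Set.Ioo R₁ R₂) :=
    hψU.deriv_of_isOpen hU (by norm_num)
  -- differentiability at points of Ioo
  have dφ : ∀ x ∈ Set.Ioo R₁ R₂, DifferentiableAt ℝ φ x := fun x hx =>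
    (hφU.differentiableOn (by norm_num)).differentiableAt (hU.mem_nhds hx)
  have dψ : ∀ x ∈ Set.Ioo R₁ R₂, DifferentiableAt ℝ ψ x := fun x hx =>
    (hψU.differentiableOn (by norm_num)).differentiableAt (hU.mem_nhds hx)
  have dφ' : ∀ x ∈ Set.Ioo R₁ R₂, DifferentiableAt ℝ (deriv φ) x := fun x hx =>
    (hφ'U.differentiableOn (by norm_num)).differentiableAt (hU.mem_nhds hx)
  have dψ' : ∀ x ∈ Set.Ioo R₁ R₂, DifferentiableAt ℝ (deriv ψ) x := fun x hx =>
    (hψ'U.differentiableOn (by norm_num)).differentiableAt (hU.mem_nhds hx)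
  -- formula for deriv θ on Ioo
  have hθ' : ∀ x ∈ Set.Ioo R₁ R₂,
      deriv θ x = φ x * deriv φ x - deriv ψ x * Real.exp (-(2 * ψ x)) := by
    intro x hx
    have hφd : HasDerivAt φ (deriv φ x) x := (dφ x hx).hasDerivAt
    have hψd : HasDerivAt ψ (deriv ψ x) x := (dψ x hx).hasDerivAt
    have h1 : HasDerivAt (fun y => (φ y) ^ 2 / 2)
        (2 * φ x ^ 1 * deriv φ x / 2) x := (hφd.pow 2).div_const 2
    have h2 : HasDerivAt (fun y => -(2 * ψ y)) (-(2 * deriv ψ x)) x :=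
      (hψd.const_mul 2).neg
    have h3 : HasDerivAt (fun y => Real.exp (-(2 * ψ y)))
        (Real.exp (-(2 * ψ x)) * -(2 * deriv ψ x)) x := h2.exp
    have h4 : HasDerivAt θ
        (2 * φ x ^ 1 * deriv φ x / 2 +
          Real.exp (-(2 * ψ x)) * -(2 * deriv ψ x) / 2) x := by
      rw [hθfun]
      exact h1.add ((h3.sub_const _).div_const 2)
    rw [h4.deriv]; ring
  refine ⟨?_, ?_, ?_, ?_⟩
  · rw [hθfun]
    have h1 : ContDiffOn ℝ 2 (fun r => (φ r) ^ 2 / 2) (Set.Icc R₁ R₂) :=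
      (hφ.pow 2).div_const 2
    have h2 : ContDiffOn ℝ 2 (fun r => Real.exp (-(2 * ψ r))) (Set.Icc R₁ R₂) :=
      Real.contDiff_exp.comp_contDiffOn ((contDiffOn_const.mul hψ).neg)
    exact h1.add (((h2.sub contDiffOn_const).div_const 2))
  · intro r hr
    have hr0 : (r : ℝ) ≠ 0 := ne_of_gt (lt_trans hR₁ hr.1)
    -- the eventual equality
    have hev : (fun x => x * Real.exp (2 * ψ x) * deriv θ x) =ᶠ[nhds r]
        (fun x => (x * Real.exp (2 * ψ x) * deriv φ x) * φ x - x * deriv ψ x) := by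
      filter_upwards [hU.mem_nhds hr] with x hx
      rw [hθ' x hx, Real.exp_neg]
      have h := Real.exp_ne_zero (2 * ψ x)
      field_simp
    rw [hev.deriv_eq]
    -- g = r e^{2ψ} φ'
    have dg : DifferentiableAt ℝ (fun x => x * Real.exp (2 * ψ x) * deriv φ x) r := by
      exact ((differentiableAt_fun_id.mul
        (((dψ r hr).const_mul 2).exp)).mul (dφ' r hr))
    have dh : DifferentiableAt ℝ (fun x => x * deriv ψ x) r :=
      differentiableAt_fun_id.mul (dψ' r hr)
    have Hg : HasDerivAt (fun x => x * Real.exp (2 * ψ x) * deriv φ x) 0 r := by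
      have := dg.hasDerivAt
      rwa [heq1 r hr] at this
    have Hh : HasDerivAt (fun x => x * deriv ψ x)
        (Real.exp (2 * ψ r) * (deriv φ r) ^ 2 * r) r := by
      have := dh.hasDerivAt
      have h2 := heq2 r hr
      rw [div_eq_iff hr0] at h2
      rwa [h2] at this
    have Hφd : HasDerivAt φ (deriv φ r) r := (dφ r hr).hasDerivAt
    have Htot : HasDerivAt
        (fun x => (x * Real.exp (2 * ψ x) * deriv φ x) * φ x - x * deriv ψ x)
        (0 * φ r + (r * Real.exp (2 * ψ r) * deriv φ r) * deriv φ r -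
          Real.exp (2 * ψ r) * (deriv φ r) ^ 2 * r) r := (Hg.mul Hφd).sub Hh
    rw [Htot.deriv]; ring
  · rw [hθ R₁, hφ1, hψ1]; ring
  · rw [hθ R₂, hφ2, hψ2]; ring
end

section
/- Let 0 < R₁ < R₂, a > 0, b, c ∈ ℝ. Set M = a + (e^{−2c} − e^{−2b})/a and f(x) = −x² + M x + e^{−2b}, which is strictly positive on [0,a]. Define U : [0,a] → ℝ by U(x) = ∫₀ˣ dt/f(t); then U is strictly increasing, hence a bijection from [0,a] onto [0, U(a)]. Define u(r) = U(a) · log(r/R₁)/log(R₂/R₁) for r ∈ [R₁,R₂], φ(r) = U⁻¹(u(r)), and ψ(r) = −(1/2) log f(φ(r)). Then φ and ψ are C² on [R₁,R₂] and satisfy on (R₁,R₂) the stationary system (r e^{2ψ(r)} φ'(r))' = 0 and (1/r)(r ψ'(r))' = e^{2ψ(r)} φ'(r)², with boundary values φ(R₁) = 0, φ(R₂) = a, ψ(R₁) = b, ψ(R₂) = c. -/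
open Set Filter MeasureTheory intervalIntegral Topology

lemma quad_pos' {M C p q x : ℝ} (hpq : p < q) (hp : 0 < -p^2 + M*p + C)
    (hq : 0 < -q^2 + M*q + C) (hx1 : p ≤ x) (hx2 : x ≤ q) : 0 < -x^2 + M*x + C := by
  nlinarith [mul_nonneg (sub_nonneg.2 hx1) (sub_nonneg.2 hx2),
    mul_nonneg (sub_nonneg.2 hx2) hp.le, mul_nonneg (sub_nonneg.2 hx1) hq.le,
    mul_pos (sub_pos.2 hpq) hp, mul_pos (sub_pos.2 hpq) hq]


/-- Explicit solution of the stationary two-point problem: with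
`M = a + (e^{−2c} − e^{−2b})/a`, `f(x) = −x² + Mx + e^{−2b}` (positive on `[0,a]`),
`U(x) = ∫₀ˣ dt/f(t)` (strictly increasing, a bijection from `[0,a]` onto `[0,U(a)]`),
`u(r) = U(a) log(r/R₁)/log(R₂/R₁)`, `φ = U⁻¹ ∘ u` and `ψ = −(1/2) log f(φ)`,
the pair `(φ, ψ)` is `C²` and solves the stationary Einstein–Rosen system with
boundary values `φ(R₁) = 0`, `φ(R₂) = a`, `ψ(R₁) = b`, `ψ(R₂) = c`. -/
theorem stationary_existence (R₁ R₂ a b c M : ℝ) (hR₁ : 0 < R₁) (hR₁₂ : R₁ < R₂)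
    (ha : 0 < a)
    (hM : M = a + (Real.exp (-(2 * c)) - Real.exp (-(2 * b))) / a)
    (f U u φ ψ : ℝ → ℝ)
    (hf : ∀ x : ℝ, f x = -x ^ 2 + M * x + Real.exp (-(2 * b)))
    (hU : ∀ x : ℝ, U x = ∫ t in (0 : ℝ)..x, 1 / f t)
    (hu : ∀ r : ℝ, u r = U a * Real.log (r / R₁) / Real.log (R₂ / R₁))
    (hφ : ∀ r ∈ Set.Icc R₁ R₂, φ r ∈ Set.Icc 0 a ∧ U (φ r) = u r)
    (hψ : ∀ r : ℝ, ψ r = -(1 / 2) * Real.log (f (φ r))) :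
    (∀ x ∈ Set.Icc 0 a, 0 < f x) ∧
    StrictMonoOn U (Set.Icc 0 a) ∧
    Set.BijOn U (Set.Icc 0 a) (Set.Icc 0 (U a)) ∧
    ContDiffOn ℝ 2 φ (Set.Icc R₁ R₂) ∧
    ContDiffOn ℝ 2 ψ (Set.Icc R₁ R₂) ∧
    (∀ r ∈ Set.Ioo R₁ R₂,
      deriv (fun x => x * Real.exp (2 * ψ x) * deriv φ x) r = 0) ∧
    (∀ r ∈ Set.Ioo R₁ R₂,
      deriv (fun x => x * deriv ψ x) r / r = Real.exp (2 * ψ r) * (deriv φ r) ^ 2) ∧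
    φ R₁ = 0 ∧ φ R₂ = a ∧ ψ R₁ = b ∧ ψ R₂ = c := by
  have hfeq : f = fun x => -x ^ 2 + M * x + Real.exp (-(2 * b)) := funext hf
  have hfc : Continuous f := by rw [hfeq]; fun_prop
  have hf0 : f 0 = Real.exp (-(2 * b)) := by rw [hf]; ring
  have hfa : f a = Real.exp (-(2 * c)) := by
    rw [hf, hM]; field_simp; ring
  have hf0pos : 0 < f 0 := by rw [hf0]; exact Real.exp_pos _
  have hfapos : 0 < f a := by rw [hfa]; exact Real.exp_pos _
  -- choose ε with f positive on [-ε, a+ε]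
  obtain ⟨ε, hεpos, hfJ⟩ : ∃ ε : ℝ, 0 < ε ∧ ∀ x ∈ Set.Icc (-ε) (a + ε), 0 < f x := by
    have hcont : ContinuousAt (fun ε : ℝ => min (f (-ε)) (f (a + ε))) 0 := by fun_prop
    have hev : ∀ᶠ ε in 𝓝 (0:ℝ), 0 < min (f (-ε)) (f (a + ε)) := by
      have h0 : (0:ℝ) < min (f (-0)) (f (a + 0)) := by simpa using lt_min hf0pos hfapos
      exact hcont.eventually (eventually_gt_nhds h0)
    obtain ⟨ε, hε, hεpos⟩ :=
      ((hev.filter_mono (nhdsWithin_le_nhds : 𝓝[>] (0:ℝ) ≤ 𝓝 0)).and self_mem_nhdsWithin).exists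
    refine ⟨ε, hεpos, fun x hx => ?_⟩
    have h1 : 0 < f (-ε) := lt_of_lt_of_le hε (min_le_left _ _)
    have h2 : 0 < f (a + ε) := lt_of_lt_of_le hε (min_le_right _ _)
    rw [hf]; rw [hf] at h1 h2
    exact quad_pos' (by linarith) h1 h2 hx.1 hx.2
  set I : Set ℝ := Set.Ioo (-ε) (a + ε) with hIdef
  have hIopen : IsOpen I := isOpen_Ioo
  have h0aI : Set.Icc 0 a ⊆ I := fun x hx =>
    ⟨lt_of_lt_of_le (neg_neg_iff_pos.2 hεpos) hx.1, lt_of_le_of_lt hx.2 (lt_add_of_pos_right a hεpos)⟩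
  have hIJ : I ⊆ Set.Icc (-ε) (a + ε) := Set.Ioo_subset_Icc_self
  have hfI : ∀ x ∈ I, 0 < f x := fun x hx => hfJ x (hIJ hx)
  have hfpos : ∀ x ∈ Set.Icc 0 a, 0 < f x := fun x hx => hfI x (h0aI hx)
  -- the integrand
  have hgJ : ContinuousOn (fun t => 1 / f t) (Set.Icc (-ε) (a + ε)) :=
    continuousOn_const.div hfc.continuousOn (fun x hx => (hfJ x hx).ne')
  have hgI : ContinuousOn (fun t => 1 / f t) I := hgJ.mono hIJ
  have h0J : (0:ℝ) ∈ Set.Icc (-ε) (a + ε) := ⟨by linarith, by linarith⟩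
  have hInt : ∀ x ∈ Set.Icc (-ε) (a + ε),
      IntervalIntegrable (fun t => 1 / f t) volume 0 x := fun x hx =>
    (hgJ.mono (Set.uIcc_subset_Icc h0J hx)).intervalIntegrable
  have hUfun : U = fun y => ∫ t in (0:ℝ)..y, 1 / f t := funext hU
  have hUd : ∀ x ∈ I, HasDerivAt U (f x)⁻¹ x := by
    intro x hx
    have h1 : HasDerivAt (fun y => ∫ t in (0:ℝ)..y, 1 / f t) (1 / f x) x :=
      intervalIntegral.integral_hasDerivAt_right (hInt x (hIJ hx))
        (hgI.stronglyMeasurableAtFilter hIopen x hx)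
        (hgI.continuousAt (hIopen.mem_nhds hx))
    rw [hUfun]
    simpa [one_div] using h1
  have hUmono : StrictMonoOn U I := by
    apply strictMonoOn_of_deriv_pos (convex_Ioo _ _)
    · exact fun x hx => (hUd x hx).continuousAt.continuousWithinAt
    · intro x hx
      rw [interior_Ioo] at hx
      rw [(hUd x hx).deriv]
      exact inv_pos.2 (hfI x hx)
  have hU0 : U 0 = 0 := by rw [hU]; exact intervalIntegral.integral_same
  -- C² of U on I
  have hUcd : ContDiffOn ℝ 2 U I := by
    have h2 : (2 : WithTop ℕ∞) = 1 + 1 := by norm_num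
    rw [h2, contDiffOn_succ_iff_deriv_of_isOpen hIopen]
    refine ⟨fun x hx => (hUd x hx).differentiableAt.differentiableWithinAt, ?_, ?_⟩
    · intro h; exact absurd h (by norm_num)
    · have hinv : ContDiffOn ℝ 1 (fun x => (f x)⁻¹) I :=
        ((by rw [hfeq]; fun_prop : ContDiff ℝ 1 f).contDiffOn).inv
          (fun x hx => (hfI x hx).ne')
      exact hinv.congr (fun x hx => (hUd x hx).deriv)
  -- facts about u
  have hL : 0 < Real.log (R₂ / R₁) := Real.log_pos ((one_lt_div hR₁).2 hR₁₂)
  set K : ℝ := U a / Real.log (R₂ / R₁) with hKdef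
  have hu' : ∀ r : ℝ, u r = K * Real.log (r / R₁) := by
    intro r; rw [hu, hKdef]; ring
  have hueq : u = fun r => K * Real.log (r / R₁) := funext hu'
  have hucd : ∀ r : ℝ, 0 < r → ContDiffAt ℝ 2 u r := by
    intro r hr
    rw [hueq]
    exact contDiffAt_const.mul
      (((Real.contDiffAt_log.2 (div_ne_zero hr.ne' hR₁.ne')).comp r
        (contDiffAt_id.div_const _)))
  have hud : ∀ r : ℝ, 0 < r → HasDerivAt u (K / r) r := by
    intro r hr
    rw [hueq]
    have h1 : HasDerivAt (fun s : ℝ => s / R₁) (1 / R₁) r := (hasDerivAt_id r).div_const _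
    have h2 : HasDerivAt Real.log (r / R₁)⁻¹ (r / R₁) :=
      Real.hasDerivAt_log (div_ne_zero hr.ne' hR₁.ne')
    have h3 := (h2.comp r h1).const_mul K
    refine h3.congr_deriv ?_
    have := hr.ne'
    have := hR₁.ne'
    field_simp
  have huR₁ : u R₁ = 0 := by rw [hu', div_self hR₁.ne', Real.log_one, mul_zero]
  have huR₂ : u R₂ = U a := by rw [hu, mul_div_assoc, div_self hL.ne', mul_one]
  -- key local-inverse construction
  have hn12 : (2 : WithTop ℕ∞) ≠ 0 := by norm_num
  have key : ∀ r₀ ∈ Set.Icc R₁ R₂, ∃ V : ℝ → ℝ,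
      ContDiffAt ℝ 2 V (u r₀) ∧ HasDerivAt V (f (φ r₀)) (u r₀) ∧
      (∀ᶠ s in 𝓝 r₀, s ∈ Set.Icc R₁ R₂ → φ s = V (u s)) := by
    intro r₀ hr₀
    obtain ⟨hφmem, hUφ⟩ := hφ r₀ hr₀
    set x₀ := φ r₀ with hx₀def
    have hx₀I : x₀ ∈ I := h0aI hφmem
    have hcd : ContDiffAt ℝ 2 U x₀ := (hUcd x₀ hx₀I).contDiffAt (hIopen.mem_nhds hx₀I)
    have hd : HasDerivAt U (f x₀)⁻¹ x₀ := hUd x₀ hx₀I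
    have hne : (f x₀)⁻¹ ≠ 0 := inv_ne_zero (hfI _ hx₀I).ne'
    have hfd := hd.hasFDerivAt_equiv hne
    set V : ℝ → ℝ := hcd.localInverse hfd hn12 with hVdef
    have hSF := hcd.hasStrictFDerivAt' hfd hn12
    have hVx₀ : V (U x₀) = x₀ := hcd.localInverse_apply_image hfd hn12
    have hVcd : ContDiffAt ℝ 2 V (U x₀) := hcd.to_localInverse hfd hn12
    have hstrict : HasStrictDerivAt U (f x₀)⁻¹ x₀ := hcd.hasStrictDerivAt' hd hn12
    have hVd : HasStrictDerivAt V ((f x₀)⁻¹)⁻¹ (U x₀) := hstrict.to_localInverse hne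
    rw [inv_inv] at hVd
    -- right inverse and membership eventually
    have hright : ∀ᶠ y in 𝓝 (U x₀), U (V y) = y := hSF.eventually_right_inverse
    have hVcont : ContinuousAt V (U x₀) := hSF.localInverse_continuousAt
    have hmem : ∀ᶠ y in 𝓝 (U x₀), V y ∈ I := by
      apply hVcont.eventually_mem
      rw [hVx₀]
      exact hIopen.mem_nhds hx₀I
    have h1 : ∀ᶠ y in 𝓝 (U x₀), U (V y) = y ∧ V y ∈ I := hright.and hmem
    rw [hUφ] at h1 hVcd hVd
    have hucont : ContinuousAt u r₀ := (hucd r₀ (lt_of_lt_of_le hR₁ hr₀.1)).continuousAt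
    have h2 : ∀ᶠ s in 𝓝 r₀, U (V (u s)) = u s ∧ V (u s) ∈ I := hucont.eventually h1
    refine ⟨V, hVcd, hVd.hasDerivAt, h2.mono fun s hs hsIcc => ?_⟩
    obtain ⟨hφs, hUφs⟩ := hφ s hsIcc
    exact hUmono.injOn (h0aI hφs) hs.2 (by rw [hUφs, hs.1])
  -- derivative of φ on the open interval
  have hφd : ∀ r ∈ Set.Ioo R₁ R₂, HasDerivAt φ (f (φ r) * (K / r)) r := by
    intro r hr
    obtain ⟨V, hVcd, hVd, hev⟩ := key r (Set.Ioo_subset_Icc_self hr)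
    have hrpos : 0 < r := lt_trans hR₁ hr.1
    have hfull : φ =ᶠ[𝓝 r] fun s => V (u s) := by
      filter_upwards [hev, isOpen_Ioo.eventually_mem hr] with s h1 h2
      exact h1 (Set.Ioo_subset_Icc_self h2)
    have hVu : HasDerivAt (fun s => V (u s)) (f (φ r) * (K / r)) r :=
      hVd.comp r (hud r hrpos)
    exact hVu.congr_of_eventuallyEq hfull
  have hψeq : ψ = fun s => -(1/2) * Real.log (f (φ s)) := funext hψ
  have hψd : ∀ r ∈ Set.Ioo R₁ R₂,
      HasDerivAt ψ (-(1/2) * ((f (φ r))⁻¹ * ((M - 2 * φ r) * (f (φ r) * (K / r))))) r := by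
    intro r hr
    have hrIcc := Set.Ioo_subset_Icc_self hr
    have hfφpos : 0 < f (φ r) := hfpos _ (hφ r hrIcc).1
    have hpoly : HasDerivAt f (M - 2 * φ r) (φ r) := by
      rw [hfeq]
      have h := (((hasDerivAt_pow 2 (φ r)).neg).add
        ((hasDerivAt_id (φ r)).const_mul M)).add_const (Real.exp (-(2*b)))
      refine h.congr_deriv ?_
      simp
      ring
    have hfφ : HasDerivAt (fun s => f (φ s)) ((M - 2 * φ r) * (f (φ r) * (K / r))) r :=
      hpoly.comp r (hφd r hr)
    have hlog : HasDerivAt (fun s => Real.log (f (φ s)))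
        ((f (φ r))⁻¹ * ((M - 2 * φ r) * (f (φ r) * (K / r)))) r :=
      by have := (Real.hasDerivAt_log hfφpos.ne').comp r hfφ; exact this
    rw [hψeq]
    exact hlog.const_mul _
  have hexp : ∀ s ∈ Set.Icc R₁ R₂, Real.exp (2 * ψ s) = (f (φ s))⁻¹ := by
    intro s hs
    have hfφpos : 0 < f (φ s) := hfpos _ (hφ s hs).1
    rw [hψ s, show 2 * (-(1/2) * Real.log (f (φ s))) = -Real.log (f (φ s)) by ring,
      Real.exp_neg, Real.exp_log hfφpos]
  -- the first ODE
  have ode1 : ∀ r ∈ Set.Ioo R₁ R₂,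
      deriv (fun x => x * Real.exp (2 * ψ x) * deriv φ x) r = 0 := by
    intro r hr
    have heq : (fun x => x * Real.exp (2 * ψ x) * deriv φ x) =ᶠ[𝓝 r] fun _ => K := by
      filter_upwards [isOpen_Ioo.eventually_mem hr] with s hs
      have hspos : 0 < s := lt_trans hR₁ hs.1
      have hfφs : 0 < f (φ s) := hfpos _ (hφ s (Set.Ioo_subset_Icc_self hs)).1
      have hds : deriv φ s = f (φ s) * (K / s) := (hφd s hs).deriv
      show s * Real.exp (2 * ψ s) * deriv φ s = K
      rw [hds, hexp s (Set.Ioo_subset_Icc_self hs)]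
      field_simp
    rw [heq.deriv_eq, deriv_const]
  -- the second ODE
  have ode2 : ∀ r ∈ Set.Ioo R₁ R₂,
      deriv (fun x => x * deriv ψ x) r / r = Real.exp (2 * ψ r) * (deriv φ r) ^ 2 := by
    intro r hr
    have hrpos : 0 < r := lt_trans hR₁ hr.1
    have hrIcc := Set.Ioo_subset_Icc_self hr
    have hfφr : 0 < f (φ r) := hfpos _ (hφ r hrIcc).1
    have heq : (fun x => x * deriv ψ x) =ᶠ[𝓝 r] fun x => K * φ x - K * M / 2 := by
      filter_upwards [isOpen_Ioo.eventually_mem hr] with s hs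
      have hspos : 0 < s := lt_trans hR₁ hs.1
      have hfφs : 0 < f (φ s) := hfpos _ (hφ s (Set.Ioo_subset_Icc_self hs)).1
      show s * deriv ψ s = K * φ s - K * M / 2
      rw [(hψd s hs).deriv]
      field_simp
      ring
    have hd2 : HasDerivAt (fun x => K * φ x - K * M / 2) (K * (f (φ r) * (K / r))) r :=
      ((hφd r hr).const_mul K).sub_const _
    rw [heq.deriv_eq, hd2.deriv, (hφd r hr).deriv, hexp r hrIcc]
    field_simp
  -- C² regularity of φ
  have hφcd : ContDiffOn ℝ 2 φ (Set.Icc R₁ R₂) := by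
    intro r hr
    obtain ⟨V, hVcd, _, hev⟩ := key r hr
    have hVu : ContDiffAt ℝ 2 (fun s => V (u s)) r :=
      hVcd.comp r (hucd r (lt_of_lt_of_le hR₁ hr.1))
    apply hVu.contDiffWithinAt.congr_of_eventuallyEq
    · exact ((hev.filter_mono nhdsWithin_le_nhds).and self_mem_nhdsWithin).mono
        fun s hs => hs.1 hs.2
    · exact hev.self_of_nhds hr
  -- C² regularity of ψ
  have hfc2 : ContDiff ℝ 2 f := by rw [hfeq]; fun_prop
  have hψcd : ContDiffOn ℝ 2 ψ (Set.Icc R₁ R₂) := by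
    rw [hψeq]
    intro r hr
    have h1 : ContDiffAt ℝ 2 (fun t => -(1/2 : ℝ) * Real.log (f t)) (φ r) :=
      contDiffAt_const.mul
        ((Real.contDiffAt_log.2 (hfpos _ (hφ r hr).1).ne').comp (φ r) hfc2.contDiffAt)
    exact h1.comp_contDiffWithinAt r (hφcd r hr)
  -- boundary values
  have hφR₁ : φ R₁ = 0 := by
    obtain ⟨hm, hUeq⟩ := hφ R₁ ⟨le_refl _, hR₁₂.le⟩
    exact hUmono.injOn (h0aI hm) (h0aI ⟨le_refl 0, ha.le⟩) (by rw [hUeq, huR₁, hU0])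
  have hφR₂ : φ R₂ = a := by
    obtain ⟨hm, hUeq⟩ := hφ R₂ ⟨hR₁₂.le, le_refl _⟩
    exact hUmono.injOn (h0aI hm) (h0aI ⟨ha.le, le_refl a⟩) (by rw [hUeq, huR₂])
  have hψR₁ : ψ R₁ = b := by
    rw [hψ, hφR₁, hf0, Real.log_exp]; ring
  have hψR₂ : ψ R₂ = c := by
    rw [hψ, hφR₂, hfa, Real.log_exp]; ring
  -- strict monotonicity and bijection on [0,a]
  have hUm : StrictMonoOn U (Set.Icc 0 a) := hUmono.mono h0aI
  have hsurj : Set.SurjOn U (Set.Icc 0 a) (Set.Icc 0 (U a)) := by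
    have h := intermediate_value_Icc ha.le (hUcd.continuousOn.mono h0aI)
    rwa [hU0] at h
  have hmaps : Set.MapsTo U (Set.Icc 0 a) (Set.Icc 0 (U a)) := fun x hx =>
    ⟨hU0 ▸ hUm.monotoneOn ⟨le_refl 0, ha.le⟩ hx hx.1,
      hUm.monotoneOn hx ⟨ha.le, le_refl a⟩ hx.2⟩
  exact ⟨hfpos, hUm, ⟨hmaps, hUm.injOn, hsurj⟩, hφcd, hψcd, ode1, ode2,
    hφR₁, hφR₂, hψR₁, hψR₂⟩
end

section
/- Let 0 < R₁ < R₂, a > 0, b, c ∈ ℝ. Suppose (φ₁, ψ₁) and (φ₂, ψ₂) are two pairs of C² functions on [R₁,R₂] each satisfying on (R₁,R₂) the stationary system (r e^{2ψ(r)} φ'(r))' = 0 and (1/r)(r ψ'(r))' = e^{2ψ(r)} φ'(r)², with the same boundary data φ(R₁) = 0, φ(R₂) = a, ψ(R₁) = b, ψ(R₂) = c. Then φ₁ = φ₂ and ψ₁ = ψ₂ on [R₁,R₂]. -/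
set_option maxHeartbeats 1000000


/-- Minkowski (−,+,+) signature: the Gram determinant of any three vectors in `ℝ³`
is `− det(a,b,c)² ≤ 0`.  Stated with abstract names for the Gram entries. -/
lemma gram_det_nonpos (a0 a1 a2 b0 b1 b2 c0 c1 c2 gaa gbb gcc gab gac gbc : ℝ)
    (haa : -a0*a0+a1*a1+a2*a2 = gaa) (hbb : -b0*b0+b1*b1+b2*b2 = gbb)
    (hcc : -c0*c0+c1*c1+c2*c2 = gcc) (hab : -a0*b0+a1*b1+a2*b2 = gab)
    (hac : -a0*c0+a1*c1+a2*c2 = gac) (hbc : -b0*c0+b1*c1+b2*c2 = gbc) :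
    gaa*(gbb*gcc - gbc*gbc) - gab*(gab*gcc - gbc*gac) + gac*(gab*gbc - gbb*gac) ≤ 0 := by
  subst haa hbb hcc hab hac hbc
  nlinarith [sq_nonneg (a0*(b1*c2-b2*c1) - a1*(b0*c2-b2*c0) + a2*(b0*c1-b1*c0))]

lemma key_nonneg (x₁ x₂ y₁ y₂ u₁ u₂ v₁ v₂ : ℝ) (hy₁ : 0 < y₁) (hy₂ : 0 < y₂) :
    0 ≤ ((u₁^2+v₁^2)*y₂^2 + (u₂^2+v₂^2)*y₁^2) * (2*y₁*y₂+(x₁-x₂)^2+(y₁-y₂)^2)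
      - y₁*y₂ * (-(2*y₁*(x₁*u₁+y₁*v₁)-(x₁^2+y₁^2+1)*v₁)*(2*y₂*(x₂*u₂+y₂*v₂)-(x₂^2+y₂^2+1)*v₂)
          + (2*(u₁*y₁-x₁*v₁))*(2*(u₂*y₂-x₂*v₂))
          + (2*y₁*(x₁*u₁+y₁*v₁)-(x₁^2+y₁^2-1)*v₁)*(2*y₂*(x₂*u₂+y₂*v₂)-(x₂^2+y₂^2-1)*v₂)) := by
  have hI := gram_det_nonpos
      (2*y₁*(x₁*u₁+y₁*v₁)-(x₁^2+y₁^2+1)*v₁) (2*(u₁*y₁-x₁*v₁)) (2*y₁*(x₁*u₁+y₁*v₁)-(x₁^2+y₁^2-1)*v₁)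
      (2*y₂*(x₂*u₂+y₂*v₂)-(x₂^2+y₂^2+1)*v₂) (2*(u₂*y₂-x₂*v₂)) (2*y₂*(x₂*u₂+y₂*v₂)-(x₂^2+y₂^2-1)*v₂)
      (x₁^2+y₁^2+1) (2*x₁) (x₁^2+y₁^2-1)
      (4*y₁^2*(u₁^2+v₁^2)) (4*y₂^2*(u₂^2+v₂^2)) (-(4*y₁^2))
      (-(2*y₁*(x₁*u₁+y₁*v₁)-(x₁^2+y₁^2+1)*v₁)*(2*y₂*(x₂*u₂+y₂*v₂)-(x₂^2+y₂^2+1)*v₂)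
          + (2*(u₁*y₁-x₁*v₁))*(2*(u₂*y₂-x₂*v₂))
          + (2*y₁*(x₁*u₁+y₁*v₁)-(x₁^2+y₁^2-1)*v₁)*(2*y₂*(x₂*u₂+y₂*v₂)-(x₂^2+y₂^2-1)*v₂))
      0
      (-(x₁^2+y₁^2+1)*(2*y₂*(x₂*u₂+y₂*v₂)-(x₂^2+y₂^2+1)*v₂)
          + (2*x₁)*(2*(u₂*y₂-x₂*v₂))
          + (x₁^2+y₁^2-1)*(2*y₂*(x₂*u₂+y₂*v₂)-(x₂^2+y₂^2-1)*v₂))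
      (by ring) (by ring) (by ring) (by ring) (by ring) (by ring)
  have hII := gram_det_nonpos
      (2*y₂*(x₂*u₂+y₂*v₂)-(x₂^2+y₂^2+1)*v₂) (2*(u₂*y₂-x₂*v₂)) (2*y₂*(x₂*u₂+y₂*v₂)-(x₂^2+y₂^2-1)*v₂)
      (x₁^2+y₁^2+1) (2*x₁) (x₁^2+y₁^2-1)
      (x₂^2+y₂^2+1) (2*x₂) (x₂^2+y₂^2-1)
      (4*y₂^2*(u₂^2+v₂^2)) (-(4*y₁^2)) (-(4*y₂^2))
      (-(x₁^2+y₁^2+1)*(2*y₂*(x₂*u₂+y₂*v₂)-(x₂^2+y₂^2+1)*v₂)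
          + (2*x₁)*(2*(u₂*y₂-x₂*v₂))
          + (x₁^2+y₁^2-1)*(2*y₂*(x₂*u₂+y₂*v₂)-(x₂^2+y₂^2-1)*v₂))
      0
      (-(2*(y₁*y₂+y₁*y₂)+(x₁-x₂)^2+(y₁-y₂)^2+(x₁-x₂)^2+(y₁-y₂)^2)/1)
      (by ring) (by ring) (by ring) (by ring) (by ring) (by ring)
  set D : ℝ := 2*y₁*y₂+(x₁-x₂)^2+(y₁-y₂)^2 with hD
  set E₁ : ℝ := u₁^2+v₁^2 with hE₁
  set E₂ : ℝ := u₂^2+v₂^2 with hE₂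
  set Pm : ℝ := -(2*y₁*(x₁*u₁+y₁*v₁)-(x₁^2+y₁^2+1)*v₁)*(2*y₂*(x₂*u₂+y₂*v₂)-(x₂^2+y₂^2+1)*v₂)
          + (2*(u₁*y₁-x₁*v₁))*(2*(u₂*y₂-x₂*v₂))
          + (2*y₁*(x₁*u₁+y₁*v₁)-(x₁^2+y₁^2-1)*v₁)*(2*y₂*(x₂*u₂+y₂*v₂)-(x₂^2+y₂^2-1)*v₂) with hPm
  set Pq : ℝ := -(x₁^2+y₁^2+1)*(2*y₂*(x₂*u₂+y₂*v₂)-(x₂^2+y₂^2+1)*v₂)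
          + (2*x₁)*(2*(u₂*y₂-x₂*v₂))
          + (x₁^2+y₁^2-1)*(2*y₂*(x₂*u₂+y₂*v₂)-(x₂^2+y₂^2-1)*v₂) with hPq
  have hDval : -(2*(y₁*y₂+y₁*y₂)+(x₁-x₂)^2+(y₁-y₂)^2+(x₁-x₂)^2+(y₁-y₂)^2)/1 = -(2*D) := by
    rw [hD]; ring
  rw [hDval] at hII
  have hE₁0 : 0 ≤ E₁ := by rw [hE₁]; positivity
  have hE₂0 : 0 ≤ E₂ := by rw [hE₂]; positivity
  have hD0 : 0 ≤ D := by rw [hD]; nlinarith [sq_nonneg (x₁-x₂), sq_nonneg y₁, sq_nonneg y₂]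
  clear_value D E₁ E₂ Pm Pq
  have ineqA : Pm^2 ≤ 16*y₁^2*y₂^2*E₁*E₂ + E₁*Pq^2 :=
    le_of_mul_le_mul_left (by nlinarith [hI]) (show (0:ℝ) < 4*y₁^2 by positivity)
  have ineqB : Pq^2 ≤ 4*E₂*(D^2 - 4*y₁^2*y₂^2) :=
    le_of_mul_le_mul_left (by nlinarith [hII]) (show (0:ℝ) < 4*y₂^2 by positivity)
  have h₁ : 0 ≤ y₁^2*y₂^2 * (16*y₁^2*y₂^2*E₁*E₂ + E₁*Pq^2 - Pm^2) :=
    mul_nonneg (by positivity) (by linarith)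
  have h₂ : 0 ≤ (E₁*y₁^2*y₂^2) * (4*E₂*(D^2 - 4*y₁^2*y₂^2) - Pq^2) :=
    mul_nonneg (by positivity) (by linarith)
  have hA : 0 ≤ (E₁*y₂^2+E₂*y₁^2)*D := mul_nonneg (by positivity) hD0
  have hAB : (y₁*y₂*Pm)^2 ≤ ((E₁*y₂^2+E₂*y₁^2)*D)^2 := by
    linarith [h₁, h₂, sq_nonneg ((E₁*y₂^2-E₂*y₁^2)*D)]
  rcases le_or_gt Pm 0 with h | h
  · have h3 : y₁*y₂*Pm ≤ 0 := mul_nonpos_of_nonneg_of_nonpos (by positivity) h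
    nlinarith [hA, h3]
  · have hB : 0 < y₁*y₂*Pm := by positivity
    nlinarith [hA, hAB, hB]

/-- Uniqueness core: two hyperbolic-plane geodesics (in upper half-plane
coordinates `x`, `y`) on `[T₁,T₂]` with the same endpoints coincide. -/
lemma geodesic_unique (T₁ T₂ : ℝ) (hT : T₁ < T₂) (x₁ y₁ u₁ v₁ x₂ y₂ u₂ v₂ : ℝ → ℝ)
    (cx₁ : ContinuousOn x₁ (Set.Icc T₁ T₂)) (cy₁ : ContinuousOn y₁ (Set.Icc T₁ T₂))
    (cx₂ : ContinuousOn x₂ (Set.Icc T₁ T₂)) (cy₂ : ContinuousOn y₂ (Set.Icc T₁ T₂))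
    (py₁ : ∀ t ∈ Set.Icc T₁ T₂, 0 < y₁ t) (py₂ : ∀ t ∈ Set.Icc T₁ T₂, 0 < y₂ t)
    (hx₁ : ∀ t ∈ Set.Ioo T₁ T₂, HasDerivAt x₁ (u₁ t) t)
    (hy₁ : ∀ t ∈ Set.Ioo T₁ T₂, HasDerivAt y₁ (v₁ t) t)
    (hu₁ : ∀ t ∈ Set.Ioo T₁ T₂, HasDerivAt u₁ (2 * v₁ t * u₁ t / y₁ t) t)
    (hv₁ : ∀ t ∈ Set.Ioo T₁ T₂, HasDerivAt v₁ ((v₁ t ^ 2 - u₁ t ^ 2) / y₁ t) t)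
    (hx₂ : ∀ t ∈ Set.Ioo T₁ T₂, HasDerivAt x₂ (u₂ t) t)
    (hy₂ : ∀ t ∈ Set.Ioo T₁ T₂, HasDerivAt y₂ (v₂ t) t)
    (hu₂ : ∀ t ∈ Set.Ioo T₁ T₂, HasDerivAt u₂ (2 * v₂ t * u₂ t / y₂ t) t)
    (hv₂ : ∀ t ∈ Set.Ioo T₁ T₂, HasDerivAt v₂ ((v₂ t ^ 2 - u₂ t ^ 2) / y₂ t) t)
    (bx1 : x₁ T₁ = x₂ T₁) (bx2 : x₁ T₂ = x₂ T₂)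
    (by1 : y₁ T₁ = y₂ T₁) (by2 : y₁ T₂ = y₂ T₂) :
    ∀ t ∈ Set.Icc T₁ T₂, x₁ t = x₂ t ∧ y₁ t = y₂ t := by
  have hIoo : Set.Ioo T₁ T₂ ⊆ Set.Icc T₁ T₂ := Set.Ioo_subset_Icc_self
  set Q : ℝ → ℝ := fun t => ((x₁ t - x₂ t)^2 + (y₁ t - y₂ t)^2) / (2 * (y₁ t * y₂ t)) with hQ
  set Qd : ℝ → ℝ := fun t =>
      ((2*(x₁ t - x₂ t)*(u₁ t - u₂ t) + 2*(y₁ t - y₂ t)*(v₁ t - v₂ t)) * (2*(y₁ t*y₂ t))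
        - ((x₁ t - x₂ t)^2 + (y₁ t - y₂ t)^2) * (2*(v₁ t*y₂ t + y₁ t*v₂ t)))
        / (2*(y₁ t*y₂ t))^2 with hQd
  -- first derivative
  have HQd : ∀ t ∈ Set.Ioo T₁ T₂, HasDerivAt Q (Qd t) t := by
    intro t ht
    have h1 := hx₁ t ht; have h2 := hx₂ t ht; have h3 := hy₁ t ht; have h4 := hy₂ t ht
    have hyne : 2 * (y₁ t * y₂ t) ≠ 0 := by
      have := py₁ t (hIoo ht); have := py₂ t (hIoo ht); positivity
    have Hnum : HasDerivAt (fun s => (x₁ s - x₂ s)^2 + (y₁ s - y₂ s)^2)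
        (2*(x₁ t - x₂ t)*(u₁ t - u₂ t) + 2*(y₁ t - y₂ t)*(v₁ t - v₂ t)) t := by
      have a1 := ((h1.fun_sub h2).fun_pow 2)
      have a2 := ((h3.fun_sub h4).fun_pow 2)
      refine HasDerivAt.congr_deriv (a1.fun_add a2) (Eq.symm ?_)
      ring
    have Hden : HasDerivAt (fun s => 2 * (y₁ s * y₂ s)) (2*(v₁ t*y₂ t + y₁ t*v₂ t)) t :=
      (h3.mul h4).const_mul 2
    exact Hnum.div Hden hyne
  set Qdd : ℝ → ℝ := fun t =>
      (((u₁ t^2+v₁ t^2)*(y₂ t)^2 + (u₂ t^2+v₂ t^2)*(y₁ t)^2)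
          * (2*(y₁ t)*(y₂ t)+(x₁ t-x₂ t)^2+(y₁ t-y₂ t)^2)
        - (y₁ t)*(y₂ t) * (-(2*(y₁ t)*((x₁ t)*(u₁ t)+(y₁ t)*(v₁ t))-((x₁ t)^2+(y₁ t)^2+1)*(v₁ t))
              *(2*(y₂ t)*((x₂ t)*(u₂ t)+(y₂ t)*(v₂ t))-((x₂ t)^2+(y₂ t)^2+1)*(v₂ t))
            + (2*((u₁ t)*(y₁ t)-(x₁ t)*(v₁ t)))*(2*((u₂ t)*(y₂ t)-(x₂ t)*(v₂ t)))
            + (2*(y₁ t)*((x₁ t)*(u₁ t)+(y₁ t)*(v₁ t))-((x₁ t)^2+(y₁ t)^2-1)*(v₁ t))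
              *(2*(y₂ t)*((x₂ t)*(u₂ t)+(y₂ t)*(v₂ t))-((x₂ t)^2+(y₂ t)^2-1)*(v₂ t))))
        / (2*(y₁ t)^3*(y₂ t)^3) with hQdd
  -- second derivative
  have HQdd : ∀ t ∈ Set.Ioo T₁ T₂, HasDerivAt Qd (Qdd t) t := by
    intro t ht
    have d1 := hx₁ t ht; have d2 := hx₂ t ht; have d3 := hy₁ t ht; have d4 := hy₂ t ht
    have e1 := hu₁ t ht; have e2 := hu₂ t ht; have e3 := hv₁ t ht; have e4 := hv₂ t ht
    have hy1 : 0 < y₁ t := py₁ t (hIoo ht)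
    have hy2 : 0 < y₂ t := py₂ t (hIoo ht)
    have hC0 : (2*(y₁ t*y₂ t))^2 ≠ 0 := by positivity
    have HB := ((((d1.fun_sub d2).const_mul 2).fun_mul (e1.fun_sub e2)).fun_add
        (((d3.fun_sub d4).const_mul 2).fun_mul (e3.fun_sub e4))).fun_mul ((d3.fun_mul d4).const_mul 2) |>.fun_sub
      ((((d1.fun_sub d2).fun_pow 2).fun_add ((d3.fun_sub d4).fun_pow 2)).fun_mul
        (((e3.fun_mul d4).fun_add (d3.fun_mul e4)).const_mul 2))
    have HC := ((d3.fun_mul d4).const_mul 2).fun_pow 2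
    refine HasDerivAt.congr_deriv (HB.fun_div HC hC0) (Eq.symm ?_)
    have h1 : y₁ t ≠ 0 := ne_of_gt hy1
    have h2 : y₂ t ≠ 0 := ne_of_gt hy2
    simp only [hQdd]
    field_simp
    ring
  have Qdd_nonneg : ∀ t ∈ Set.Ioo T₁ T₂, 0 ≤ Qdd t := by
    intro t ht
    have hy1 := py₁ t (hIoo ht); have hy2 := py₂ t (hIoo ht)
    exact div_nonneg (key_nonneg (x₁ t) (x₂ t) (y₁ t) (y₂ t) (u₁ t) (u₂ t) (v₁ t) (v₂ t) hy1 hy2)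
      (by positivity)
  have QcontOn : ContinuousOn Q (Set.Icc T₁ T₂) := by
    apply ContinuousOn.div
    · exact ((cx₁.sub cx₂).pow 2).add ((cy₁.sub cy₂).pow 2)
    · exact continuousOn_const.mul (cy₁.mul cy₂)
    · intro t ht
      have := py₁ t ht; have := py₂ t ht; positivity
  have hderivQ : ∀ t ∈ Set.Ioo T₁ T₂, deriv Q =ᶠ[nhds t] Qd := by
    intro t ht
    exact Filter.eventuallyEq_of_mem (Ioo_mem_nhds ht.1 ht.2) (fun s hs => (HQd s hs).deriv)
  have hconv : ConvexOn ℝ (Set.Icc T₁ T₂) Q := by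
    apply convexOn_of_deriv2_nonneg (convex_Icc T₁ T₂) QcontOn
    · rw [interior_Icc]
      exact fun t ht => (HQd t ht).differentiableAt.differentiableWithinAt
    · rw [interior_Icc]
      intro t ht
      exact (((hderivQ t ht).differentiableAt_iff).2
        (HQdd t ht).differentiableAt).differentiableWithinAt
    · rw [interior_Icc]
      intro t ht
      have e1 : deriv (deriv Q) t = deriv Qd t := (hderivQ t ht).deriv_eq
      have e2 : deriv Qd t = Qdd t := (HQdd t ht).deriv
      simp only [Function.iterate_succ, Function.iterate_zero, Function.comp_apply, id_eq]
      rw [e1, e2]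
      exact Qdd_nonneg t ht
  have hQ0 : ∀ t ∈ Set.Icc T₁ T₂, Q t = 0 := by
    intro t ht
    have hT1 : Q T₁ = 0 := by
      simp only [hQ]
      rw [bx1, by1]
      simp
    have hT2 : Q T₂ = 0 := by
      simp only [hQ]
      rw [bx2, by2]
      simp
    have hseg : t ∈ segment ℝ T₁ T₂ := by rw [segment_eq_Icc hT.le]; exact ht
    have hle := hconv.le_on_segment (Set.left_mem_Icc.2 hT.le) (Set.right_mem_Icc.2 hT.le) hseg
    rw [hT1, hT2] at hle
    have hge : 0 ≤ Q t := by
      have := py₁ t ht; have := py₂ t ht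
      simp only [hQ]
      positivity
    simpa using le_antisymm (by simpa using hle) hge
  intro t ht
  have h := hQ0 t ht
  have hy1 := py₁ t ht; have hy2 := py₂ t ht
  have hden : (2 * (y₁ t * y₂ t)) ≠ 0 := by positivity
  have hnum : (x₁ t - x₂ t)^2 + (y₁ t - y₂ t)^2 = 0 := by
    simp only [hQ] at h
    exact (div_eq_zero_iff.mp h).resolve_right hden
  constructor
  · have : (x₁ t - x₂ t)^2 = 0 := by nlinarith [sq_nonneg (x₁ t - x₂ t), sq_nonneg (y₁ t - y₂ t)]
    have := pow_eq_zero_iff (n := 2) (by norm_num) |>.mp this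
    linarith [sub_eq_zero.mp this]
  · have : (y₁ t - y₂ t)^2 = 0 := by nlinarith [sq_nonneg (x₁ t - x₂ t), sq_nonneg (y₁ t - y₂ t)]
    have := pow_eq_zero_iff (n := 2) (by norm_num) |>.mp this
    linarith [sub_eq_zero.mp this]

/-- Transfer a stationary solution on `(R₁,R₂)` to geodesic data in `t = log r`. -/
lemma transfer (R₁ R₂ : ℝ) (hR₁ : 0 < R₁) (hR₁₂ : R₁ < R₂) (φ ψ : ℝ → ℝ)
    (hφ : ContDiffOn ℝ 2 φ (Set.Icc R₁ R₂)) (hψ : ContDiffOn ℝ 2 ψ (Set.Icc R₁ R₂))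
    (heq1 : ∀ r ∈ Set.Ioo R₁ R₂,
      deriv (fun x => x * Real.exp (2 * ψ x) * deriv φ x) r = 0)
    (heq2 : ∀ r ∈ Set.Ioo R₁ R₂,
      deriv (fun x => x * deriv ψ x) r / r = Real.exp (2 * ψ r) * (deriv φ r) ^ 2) :
    ∀ t ∈ Set.Ioo (Real.log R₁) (Real.log R₂),
      HasDerivAt (fun s => φ (Real.exp s)) (deriv φ (Real.exp t) * Real.exp t) t ∧
      HasDerivAt (fun s => Real.exp (-(ψ (Real.exp s))))
        (Real.exp (-(ψ (Real.exp t))) * -(deriv ψ (Real.exp t) * Real.exp t)) t ∧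
      HasDerivAt (fun s => deriv φ (Real.exp s) * Real.exp s)
        (2 * (Real.exp (-(ψ (Real.exp t))) * -(deriv ψ (Real.exp t) * Real.exp t))
           * (deriv φ (Real.exp t) * Real.exp t) / Real.exp (-(ψ (Real.exp t)))) t ∧
      HasDerivAt (fun s => Real.exp (-(ψ (Real.exp s))) * -(deriv ψ (Real.exp s) * Real.exp s))
        (((Real.exp (-(ψ (Real.exp t))) * -(deriv ψ (Real.exp t) * Real.exp t)) ^ 2
           - (deriv φ (Real.exp t) * Real.exp t) ^ 2) / Real.exp (-(ψ (Real.exp t)))) t := by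
  intro t ht
  set r := Real.exp t with hrdef
  have hrpos : 0 < r := Real.exp_pos t
  have hr : r ∈ Set.Ioo R₁ R₂ := by
    constructor
    · calc R₁ = Real.exp (Real.log R₁) := (Real.exp_log hR₁).symm
      _ < r := Real.exp_lt_exp.2 ht.1
    · calc r < Real.exp (Real.log R₂) := Real.exp_lt_exp.2 ht.2
      _ = R₂ := Real.exp_log (hR₁.trans hR₁₂)
  have hmem : Set.Icc R₁ R₂ ∈ nhds r := Icc_mem_nhds hr.1 hr.2
  have cφ : ContDiffAt ℝ 2 φ r := hφ.contDiffAt hmem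
  have cψ : ContDiffAt ℝ 2 ψ r := hψ.contDiffAt hmem
  have dφ : HasDerivAt φ (deriv φ r) r := (cφ.differentiableAt (by norm_num)).hasDerivAt
  have dψ : HasDerivAt ψ (deriv ψ r) r := (cψ.differentiableAt (by norm_num)).hasDerivAt
  have hφ' : ContDiffOn ℝ 1 (deriv φ) (Set.Ioo R₁ R₂) :=
    (hφ.mono Set.Ioo_subset_Icc_self).deriv_of_isOpen isOpen_Ioo (by norm_num)
  have hψ' : ContDiffOn ℝ 1 (deriv ψ) (Set.Ioo R₁ R₂) :=
    (hψ.mono Set.Ioo_subset_Icc_self).deriv_of_isOpen isOpen_Ioo (by norm_num)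
  have ddφ : HasDerivAt (deriv φ) (deriv (deriv φ) r) r :=
    (((hφ'.differentiableOn one_ne_zero).differentiableAt (isOpen_Ioo.mem_nhds hr))).hasDerivAt
  have ddψ : HasDerivAt (deriv ψ) (deriv (deriv ψ) r) r :=
    (((hψ'.differentiableOn one_ne_zero).differentiableAt (isOpen_Ioo.mem_nhds hr))).hasDerivAt
  have hexp : HasDerivAt Real.exp r t := by
    have := Real.hasDerivAt_exp t
    rwa [← hrdef] at this
  -- from heq1 : r φ' + r² φ'' = −2 r² ψ' φ'
  have hODE1 : (1 * Real.exp (2*ψ r) + r * (Real.exp (2*ψ r) * (2 * deriv ψ r))) * deriv φ r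
      + r * Real.exp (2*ψ r) * deriv (deriv φ) r = 0 := by
    have H2ψ : HasDerivAt (fun x => Real.exp (2*ψ x)) (Real.exp (2*ψ r) * (2 * deriv ψ r)) r :=
      (Real.hasDerivAt_exp _).comp r (dψ.const_mul 2)
    have H := ((hasDerivAt_id r).fun_mul H2ψ).fun_mul ddφ
    simp only [id_eq] at H
    have h0 := heq1 r hr
    rw [← H.deriv]
    exact h0
  have hkey1 : r * deriv φ r + r^2 * deriv (deriv φ) r = -(2*r^2*deriv ψ r*deriv φ r) := by
    have h2 : Real.exp (2*ψ r) *
        (deriv φ r + 2*r*deriv ψ r*deriv φ r + r*deriv (deriv φ) r) = 0 := by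
      linear_combination hODE1
    have h3 := (mul_eq_zero.mp h2).resolve_left (Real.exp_ne_zero _)
    linear_combination r * h3
  -- from heq2 : ψ' + r ψ'' = r e^{2ψ} φ'²
  have hkey2 : deriv ψ r + r * deriv (deriv ψ) r = r * (Real.exp (2*ψ r) * (deriv φ r)^2) := by
    have H := (hasDerivAt_id r).fun_mul ddψ
    simp only [id_eq] at H
    have h := heq2 r hr
    rw [H.deriv] at h
    field_simp at h
    linear_combination h
  refine ⟨?_, ?_, ?_, ?_⟩
  · exact dφ.comp t hexp
  · exact (Real.hasDerivAt_exp (-(ψ r))).comp t ((dψ.comp t hexp).neg)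
  · have HU := (ddφ.comp t hexp).mul hexp
    refine HasDerivAt.congr_deriv HU (Eq.symm ?_)
    have hE := Real.exp_ne_zero (-(ψ r))
    simp only [Function.comp_apply, Pi.mul_apply, Pi.neg_apply, ← hrdef]
    rw [div_eq_iff hE]
    linear_combination (-(Real.exp (-(ψ r)))) * hkey1
  · have HV := ((Real.hasDerivAt_exp (-(ψ r))).comp t ((dψ.comp t hexp).neg)).mul
      (((ddψ.comp t hexp).mul hexp).neg)
    refine HasDerivAt.congr_deriv HV (Eq.symm ?_)
    have hE := Real.exp_ne_zero (-(ψ r))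
    have hE2 : Real.exp (2*ψ r) * Real.exp (-(ψ r)) * Real.exp (-(ψ r)) = 1 := by
      rw [← Real.exp_add, ← Real.exp_add,
        show (2*ψ r + -ψ r + -ψ r) = 0 by ring, Real.exp_zero]
    simp only [Function.comp_apply, Pi.mul_apply, Pi.neg_apply, ← hrdef]
    rw [div_eq_iff hE]
    linear_combination (Real.exp (-(ψ r))^2 * r) * hkey2 + (r^2 * (deriv φ r)^2) * hE2

/-- Uniqueness for the stationary two-point problem: two `C²` solutions of the
stationary Einstein–Rosen system with the same boundary data coincide. -/
theorem stationary_uniqueness (R₁ R₂ a b c : ℝ) (hR₁ : 0 < R₁) (hR₁₂ : R₁ < R₂)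
    (ha : 0 < a) (φ₁ ψ₁ φ₂ ψ₂ : ℝ → ℝ)
    (hφ₁ : ContDiffOn ℝ 2 φ₁ (Set.Icc R₁ R₂)) (hψ₁ : ContDiffOn ℝ 2 ψ₁ (Set.Icc R₁ R₂))
    (hφ₂ : ContDiffOn ℝ 2 φ₂ (Set.Icc R₁ R₂)) (hψ₂ : ContDiffOn ℝ 2 ψ₂ (Set.Icc R₁ R₂))
    (heq1₁ : ∀ r ∈ Set.Ioo R₁ R₂,
      deriv (fun x => x * Real.exp (2 * ψ₁ x) * deriv φ₁ x) r = 0)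
    (heq2₁ : ∀ r ∈ Set.Ioo R₁ R₂,
      deriv (fun x => x * deriv ψ₁ x) r / r = Real.exp (2 * ψ₁ r) * (deriv φ₁ r) ^ 2)
    (heq1₂ : ∀ r ∈ Set.Ioo R₁ R₂,
      deriv (fun x => x * Real.exp (2 * ψ₂ x) * deriv φ₂ x) r = 0)
    (heq2₂ : ∀ r ∈ Set.Ioo R₁ R₂,
      deriv (fun x => x * deriv ψ₂ x) r / r = Real.exp (2 * ψ₂ r) * (deriv φ₂ r) ^ 2)
    (hbφ₁ : φ₁ R₁ = 0) (hbφ₂ : φ₁ R₂ = a) (hbψ₁ : ψ₁ R₁ = b) (hbψ₂ : ψ₁ R₂ = c)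
    (hbφ₁' : φ₂ R₁ = 0) (hbφ₂' : φ₂ R₂ = a) (hbψ₁' : ψ₂ R₁ = b) (hbψ₂' : ψ₂ R₂ = c) :
    ∀ r ∈ Set.Icc R₁ R₂, φ₁ r = φ₂ r ∧ ψ₁ r = ψ₂ r := by
  have hR₂ : 0 < R₂ := hR₁.trans hR₁₂
  have hT : Real.log R₁ < Real.log R₂ := Real.log_lt_log hR₁ hR₁₂
  have hmaps : Set.MapsTo Real.exp (Set.Icc (Real.log R₁) (Real.log R₂)) (Set.Icc R₁ R₂) := by
    intro t ht
    constructor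
    · calc R₁ = Real.exp (Real.log R₁) := (Real.exp_log hR₁).symm
      _ ≤ Real.exp t := Real.exp_le_exp.2 ht.1
    · calc Real.exp t ≤ Real.exp (Real.log R₂) := Real.exp_le_exp.2 ht.2
      _ = R₂ := Real.exp_log hR₂
  have cexp : ContinuousOn Real.exp (Set.Icc (Real.log R₁) (Real.log R₂)) :=
    Real.continuous_exp.continuousOn
  have tr₁ := transfer R₁ R₂ hR₁ hR₁₂ φ₁ ψ₁ hφ₁ hψ₁ heq1₁ heq2₁
  have tr₂ := transfer R₁ R₂ hR₁ hR₁₂ φ₂ ψ₂ hφ₂ hψ₂ heq1₂ heq2₂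
  have main := geodesic_unique (Real.log R₁) (Real.log R₂) hT
      (fun t => φ₁ (Real.exp t)) (fun t => Real.exp (-(ψ₁ (Real.exp t))))
      (fun t => deriv φ₁ (Real.exp t) * Real.exp t)
      (fun t => Real.exp (-(ψ₁ (Real.exp t))) * -(deriv ψ₁ (Real.exp t) * Real.exp t))
      (fun t => φ₂ (Real.exp t)) (fun t => Real.exp (-(ψ₂ (Real.exp t))))
      (fun t => deriv φ₂ (Real.exp t) * Real.exp t)
      (fun t => Real.exp (-(ψ₂ (Real.exp t))) * -(deriv ψ₂ (Real.exp t) * Real.exp t))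
      (hφ₁.continuousOn.comp cexp hmaps)
      (Real.continuous_exp.comp_continuousOn ((hψ₁.continuousOn.comp cexp hmaps).neg))
      (hφ₂.continuousOn.comp cexp hmaps)
      (Real.continuous_exp.comp_continuousOn ((hψ₂.continuousOn.comp cexp hmaps).neg))
      (fun t _ => Real.exp_pos _) (fun t _ => Real.exp_pos _)
      (fun t ht => (tr₁ t ht).1) (fun t ht => (tr₁ t ht).2.1)
      (fun t ht => (tr₁ t ht).2.2.1) (fun t ht => (tr₁ t ht).2.2.2)
      (fun t ht => (tr₂ t ht).1) (fun t ht => (tr₂ t ht).2.1)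
      (fun t ht => (tr₂ t ht).2.2.1) (fun t ht => (tr₂ t ht).2.2.2)
      (by simp only [Real.exp_log hR₁, hbφ₁, hbφ₁'])
      (by simp only [Real.exp_log hR₂, hbφ₂, hbφ₂'])
      (by simp only [Real.exp_log hR₁, hbψ₁, hbψ₁'])
      (by simp only [Real.exp_log hR₂, hbψ₂, hbψ₂'])
  intro r hr
  have hr0 : 0 < r := lt_of_lt_of_le hR₁ hr.1
  have hlog : Real.log r ∈ Set.Icc (Real.log R₁) (Real.log R₂) :=
    ⟨Real.log_le_log hR₁ hr.1, Real.log_le_log hr0 hr.2⟩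
  obtain ⟨hx, hy⟩ := main (Real.log r) hlog
  simp only [Real.exp_log hr0] at hx hy
  refine ⟨hx, ?_⟩
  have := Real.exp_eq_exp.mp hy
  linarith
end
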